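/- arXiv:2412.14757 — 5 statements merged into one kernel-verified Lean document; each statement's English description precedes it below -/
import Mathlib

section
/- Teleporting a layer of CZ gates via a graph state (Theorem 5): Let G be a finite simple graph on a finite vertex type V, and let ψ : (V → ZMod 2) → ℂ be any state of the computation register. Consider the protocol in which a graph-state register is prepared in |G⟩, an ancilla register is prepared in |+⟩^{⊗V}, the local gates CZ_{i,i'} and CZ_{i',i''} are applied for every i ∈ V (priming denotes the ancilla and double-priming the computation register), and all graph-state and ancilla qubits are measured in the X basis with outcomes recorded as bits m, m' : V → ZMod 2. Then for every w : V → ZMod 2 the resulting unnormalized amplitude on the computation register, F(w) = 2^{−2|V|} · Σ_{x,y : V → ZMod 2} (−1)^{Σ_{i∈V} (m i)(x i) + Σ_{i∈V} (m' i)(y i)} · (−1)^{Σ_{{i,j}∈E(G)} (x i)(x j)} · (−1)^{Σ_{i∈V} (x i)(y i) + Σ_{i∈V} (y i)(w i)} · ψ(w), satisfies F(w) = 2^{−|V|} · (−1)^{Σ_{i∈V} (m i)(m' i) + Σ_{{i,j}∈E(G)} (m' i)(m' j)} · (−1)^{Σ_{i∈V} (m i + Σ_{j∈N(i)} m' j)·(w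 i)} · (−1)^{Σ_{{i,j}∈E(G)} (w i)(w j)} · ψ(w). In other words, up to a global sign and the local Pauli corrections Z_{i''}^{m_i + Σ_{j∈N(i)} m'_j}, the protocol applies the entire layer of gates ∏_{{i,j}∈E(G)} CZ_{i''j''} to ψ using only the graph state |G⟩ and local operations. -/
/-- The sum `∑_{{i,j} ∈ E(G)} (x i)·(x j)` of products of bits over the edges of `G`,
with bits cast to the natural numbers `0, 1`. -/
def edgePairSum {V : Type*} [Fintype V] [DecidableEq V] (G : SimpleGraph V)
    [DecidableRel G.Adj] (x : V → ZMod 2) : ℕ :=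
  ∑ e ∈ G.edgeFinset,
    Sym2.lift ⟨fun i j => (x i).val * (x j).val, fun i j => Nat.mul_comm _ _⟩ e

open Finset

/-- The sign character on `ZMod 2`. -/
noncomputable def chiSign (a : ZMod 2) : ℂ := (-1) ^ a.val

/-- The `ZMod 2` dot product. -/
def dotZ {V : Type*} [Fintype V] (a b : V → ZMod 2) : ZMod 2 := ∑ i, a i * b i

/-- The `ZMod 2` edge pair sum. -/
def qZ {V : Type*} [Fintype V] [DecidableEq V] (G : SimpleGraph V)
    [DecidableRel G.Adj] (x : V → ZMod 2) : ZMod 2 :=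
  ∑ e ∈ G.edgeFinset, Sym2.lift ⟨fun i j => x i * x j, fun i j => mul_comm _ _⟩ e

lemma chiSign_natCast (n : ℕ) : (-1 : ℂ) ^ n = chiSign (n : ZMod 2) := by
  rw [chiSign, ZMod.val_natCast, ← neg_one_pow_eq_pow_mod_two]

lemma chiSign_add (a b : ZMod 2) : chiSign (a + b) = chiSign a * chiSign b := by
  have h : ((a.val + b.val : ℕ) : ZMod 2) = a + b := by
    push_cast [ZMod.natCast_val, ZMod.cast_id]; ring
  rw [← h, ← chiSign_natCast, pow_add, chiSign, chiSign]

lemma chiSign_sum {ι : Type*} (s : Finset ι) (f : ι → ZMod 2) :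
    chiSign (∑ i ∈ s, f i) = ∏ i ∈ s, chiSign (f i) := by
  induction s using Finset.cons_induction with
  | empty => simp [chiSign]
  | cons i s hi ih => rw [sum_cons, prod_cons, chiSign_add, ih]

lemma sum_chiSign_mul (c : ZMod 2) :
    ∑ a : ZMod 2, chiSign (c * a) = if c = 0 then 2 else 0 := by
  have huniv : (univ : Finset (ZMod 2)) = {0, 1} := by decide
  rw [huniv, sum_insert (by decide), sum_singleton]
  obtain rfl | rfl := (by decide : ∀ c : ZMod 2, c = 0 ∨ c = 1) c <;> simp [chiSign, ZMod.val_zero, ZMod.val_one] <;> norm_num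

set_option maxHeartbeats 1000000 in
lemma orth {V : Type*} [Fintype V] [DecidableEq V] (c : V → ZMod 2) :
    ∑ y : V → ZMod 2, chiSign (∑ i, c i * y i)
      = if c = 0 then (2 : ℂ) ^ Fintype.card V else 0 := by
  have step1 : ∑ y : V → ZMod 2, chiSign (∑ i, c i * y i)
      = ∑ y : V → ZMod 2, ∏ i, chiSign (c i * y i) :=
    sum_congr rfl fun y _ => chiSign_sum _ _
  have step2 : (∏ i : V, ∑ a : ZMod 2, chiSign (c i * a))
      = ∑ y : V → ZMod 2, ∏ i, chiSign (c i * y i) := by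
    rw [prod_univ_sum, Fintype.piFinset_univ]
  rw [step1, ← step2]
  calc ∏ i : V, ∑ a : ZMod 2, chiSign (c i * a)
      = ∏ i : V, (if c i = 0 then (2 : ℂ) else 0) :=
        prod_congr rfl fun i _ => sum_chiSign_mul _
    _ = if c = 0 then (2 : ℂ) ^ Fintype.card V else 0 := by
        by_cases hc : c = 0
        · subst hc; simp [Finset.card_univ]
        · rw [if_neg hc]
          obtain ⟨i, hi⟩ := Function.ne_iff.mp hc
          exact prod_eq_zero (mem_univ i) (by simp only [Pi.zero_apply] at hi; simp [hi])

lemma sum_neighbors_eq {V : Type*} [Fintype V] [DecidableEq V] (G : SimpleGraph V)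
    [DecidableRel G.Adj] (g : V → V → ZMod 2) :
    ∑ i, ∑ j ∈ G.neighborFinset i, g i j
      = ∑ e ∈ G.edgeFinset,
          Sym2.lift ⟨fun i j => g i j + g j i, fun i j => add_comm _ _⟩ e := by
  have h1 : ∑ i, ∑ j ∈ G.neighborFinset i, g i j
      = ∑ d : G.Dart, g d.fst d.snd := by
    rw [← Finset.sum_sigma (univ : Finset V) (fun i => G.neighborFinset i)
      (fun p => g p.1 p.2)]
    exact Finset.sum_bij'
      (fun p hp => (⟨(p.1, p.2), (SimpleGraph.mem_neighborFinset _ _ _).mp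
        (Finset.mem_sigma.mp hp).2⟩ : G.Dart))
      (fun d _ => ⟨d.fst, d.snd⟩)
      (fun _ _ => mem_univ _)
      (fun d _ => Finset.mem_sigma.mpr
        ⟨mem_univ _, (SimpleGraph.mem_neighborFinset _ _ _).mpr d.adj⟩)
      (fun p _ => rfl)
      (fun d _ => rfl)
      (fun p _ => rfl)
  rw [h1, ← Finset.sum_fiberwise_of_maps_to
      (fun (d : G.Dart) (_ : d ∈ univ) => SimpleGraph.mem_edgeFinset.mpr d.edge_mem)
      (fun d => g d.fst d.snd)]
  refine sum_congr rfl fun e he => ?_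
  induction e with
  | _ a b =>
    rw [SimpleGraph.mem_edgeFinset] at he
    have hadj : G.Adj a b := he
    set d0 : G.Dart := ⟨(a, b), hadj⟩ with hd0
    have hfib : (univ.filter fun d : G.Dart => d.edge = s(a, b)) = {d0, d0.symm} := by
      have := d0.edge_fiber
      exact this
    rw [hfib, Finset.sum_pair (d0.symm_ne).symm]
    simp [Sym2.lift_mk, hd0]

lemma cast_edgePairSum {V : Type*} [Fintype V] [DecidableEq V] (G : SimpleGraph V)
    [DecidableRel G.Adj] (x : V → ZMod 2) :
    ((edgePairSum G x : ℕ) : ZMod 2) = qZ G x := by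
  rw [edgePairSum, qZ, Nat.cast_sum]
  refine sum_congr rfl fun e _ => ?_
  induction e with
  | _ a b => push_cast [Sym2.lift_mk, ZMod.natCast_val, ZMod.cast_id]; ring

lemma cast_dot {V : Type*} [Fintype V] (a b : V → ZMod 2) :
    (((∑ i, (a i).val * (b i).val : ℕ) : ℕ) : ZMod 2) = dotZ a b := by
  rw [dotZ, Nat.cast_sum]
  exact sum_congr rfl fun i _ => by
    push_cast [ZMod.natCast_val, ZMod.cast_id]; ring

lemma qZ_add {V : Type*} [Fintype V] [DecidableEq V] (G : SimpleGraph V)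
    [DecidableRel G.Adj] (x y : V → ZMod 2) :
    qZ G (x + y) = qZ G x + qZ G y + ∑ i, (∑ j ∈ G.neighborFinset i, x j) * y i := by
  have hcross : ∑ i, (∑ j ∈ G.neighborFinset i, x j) * y i
      = ∑ e ∈ G.edgeFinset,
          Sym2.lift ⟨fun i j => x j * y i + x i * y j, fun i j => add_comm _ _⟩ e := by
    rw [← sum_neighbors_eq G (fun i j => x j * y i)]
    exact Fintype.sum_congr _ _ fun i => by rw [Finset.sum_mul]
  rw [hcross, qZ, qZ, qZ, ← Finset.sum_add_distrib, ← Finset.sum_add_distrib]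
  refine sum_congr rfl fun e _ => ?_
  induction e with
  | _ a b => simp only [Sym2.lift_mk, Pi.add_apply]; ring

/-- **Teleporting a layer of CZ gates via a graph state.**
After preparing the graph state `|G⟩` and the ancillas `|+⟩^{⊗V}`, applying the local
gates `CZ_{i,i'}` and `CZ_{i',i''}` for every `i ∈ V`, and measuring the graph-state
and ancilla registers in the `X` basis with outcomes `m, m' : V → ZMod 2`, the
unnormalized amplitude on the computation register equals — up to a global sign and the
local Pauli corrections `Z_{i''}^{m_i + Σ_{j∈N(i)} m'_j}` — the result of applying the
whole layer `∏_{{i,j}∈E(G)} CZ_{i''j''}` to `ψ`. -/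
theorem cz_layer_teleportation {V : Type*} [Fintype V] [DecidableEq V]
    (G : SimpleGraph V) [DecidableRel G.Adj]
    (ψ : (V → ZMod 2) → ℂ) (m m' w : V → ZMod 2) :
    (2 : ℂ) ^ (-(2 * (Fintype.card V : ℤ))) *
      ∑ x : V → ZMod 2, ∑ y : V → ZMod 2,
        (-1 : ℂ) ^ (∑ i, (m i).val * (x i).val + ∑ i, (m' i).val * (y i).val) *
        (-1 : ℂ) ^ edgePairSum G x *
        (-1 : ℂ) ^ (∑ i, (x i).val * (y i).val + ∑ i, (y i).val * (w i).val) *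
        ψ w
    = (2 : ℂ) ^ (-(Fintype.card V : ℤ)) *
        (-1 : ℂ) ^ (∑ i, (m i).val * (m' i).val + edgePairSum G m') *
        (-1 : ℂ) ^ (∑ i, (m i + ∑ j ∈ G.neighborFinset i, m' j).val * (w i).val) *
        (-1 : ℂ) ^ edgePairSum G w * ψ w := by
  classical
  set n := Fintype.card V with hn
  -- rewrite the summand via the character chiSign
  have hsummand : ∀ x y : V → ZMod 2,
      (-1 : ℂ) ^ (∑ i, (m i).val * (x i).val + ∑ i, (m' i).val * (y i).val) *
        (-1 : ℂ) ^ edgePairSum G x *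
        (-1 : ℂ) ^ (∑ i, (x i).val * (y i).val + ∑ i, (y i).val * (w i).val) * ψ w
      = chiSign (∑ i, (m' + x + w) i * y i) * (chiSign (dotZ m x + qZ G x) * ψ w) := by
    intro x y
    rw [chiSign_natCast, chiSign_natCast, chiSign_natCast]
    rw [Nat.cast_add, Nat.cast_add, cast_dot, cast_dot, cast_dot, cast_dot,
      cast_edgePairSum]
    rw [chiSign_add, chiSign_add]
    have harg : ∑ i, (m' + x + w) i * y i = dotZ m' y + (dotZ x y + dotZ y w) := by
      rw [dotZ, dotZ, dotZ, ← Finset.sum_add_distrib, ← Finset.sum_add_distrib]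
      exact sum_congr rfl fun i _ => by simp only [Pi.add_apply]; ring
    rw [harg, chiSign_add, chiSign_add,
      show chiSign (dotZ m x + qZ G x) = chiSign (dotZ m x) * chiSign (qZ G x) from
        chiSign_add _ _]
    ring
  have hinner : ∀ x : V → ZMod 2,
      ∑ y : V → ZMod 2,
        (-1 : ℂ) ^ (∑ i, (m i).val * (x i).val + ∑ i, (m' i).val * (y i).val) *
        (-1 : ℂ) ^ edgePairSum G x *
        (-1 : ℂ) ^ (∑ i, (x i).val * (y i).val + ∑ i, (y i).val * (w i).val) * ψ w
      = (if x = m' + w then (2 : ℂ) ^ n else 0) * (chiSign (dotZ m x + qZ G x) * ψ w) := by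
    intro x
    calc ∑ y : V → ZMod 2,
          (-1 : ℂ) ^ (∑ i, (m i).val * (x i).val + ∑ i, (m' i).val * (y i).val) *
          (-1 : ℂ) ^ edgePairSum G x *
          (-1 : ℂ) ^ (∑ i, (x i).val * (y i).val + ∑ i, (y i).val * (w i).val) * ψ w
        = (∑ y : V → ZMod 2, chiSign (∑ i, (m' + x + w) i * y i)) *
            (chiSign (dotZ m x + qZ G x) * ψ w) := by
          rw [Finset.sum_mul]
          exact sum_congr rfl fun y _ => hsummand x y
      _ = (if x = m' + w then (2 : ℂ) ^ n else 0) * (chiSign (dotZ m x + qZ G x) * ψ w) := by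
          rw [orth]
          congr 1
          have hiff : (m' + x + w = 0) ↔ (x = m' + w) := by
            constructor
            · intro h
              funext i
              have h2 : ∀ a b c : ZMod 2, a + b + c = 0 → b = a + c := by decide
              exact h2 _ _ _ (congrFun h i)
            · intro h
              funext i
              have h2 : ∀ a c : ZMod 2, a + (a + c) + c = 0 := by decide
              simpa [h] using h2 (m' i) (w i)
          simp only [hiff, hn]
  -- collapse the outer sum
  have houter : ∑ x : V → ZMod 2, ∑ y : V → ZMod 2,
        (-1 : ℂ) ^ (∑ i, (m i).val * (x i).val + ∑ i, (m' i).val * (y i).val) *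
        (-1 : ℂ) ^ edgePairSum G x *
        (-1 : ℂ) ^ (∑ i, (x i).val * (y i).val + ∑ i, (y i).val * (w i).val) * ψ w
      = (2 : ℂ) ^ n * (chiSign (dotZ m (m' + w) + qZ G (m' + w)) * ψ w) := by
    rw [Fintype.sum_congr _ _ hinner]
    rw [show (fun x => (if x = m' + w then (2 : ℂ) ^ n else 0) *
          (chiSign (dotZ m x + qZ G x) * ψ w))
        = fun x => if x = m' + w then
            (2 : ℂ) ^ n * (chiSign (dotZ m x + qZ G x) * ψ w) else 0 from
      funext fun x => by split <;> simp]
    rw [Finset.sum_ite_eq' univ (m' + w)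
      (fun x => (2 : ℂ) ^ n * (chiSign (dotZ m x + qZ G x) * ψ w))]
    simp
  rw [houter]
  -- rewrite the RHS via chiSign
  rw [chiSign_natCast (∑ i, (m i).val * (m' i).val + edgePairSum G m'),
    chiSign_natCast (∑ i, (m i + ∑ j ∈ G.neighborFinset i, m' j).val * (w i).val),
    chiSign_natCast (edgePairSum G w)]
  rw [Nat.cast_add, cast_dot, cast_edgePairSum, cast_edgePairSum]
  have hcast2 : ((∑ i, (m i + ∑ j ∈ G.neighborFinset i, m' j).val * (w i).val : ℕ) : ZMod 2)
      = ∑ i, (m i + ∑ j ∈ G.neighborFinset i, m' j) * w i := by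
    rw [Nat.cast_sum]
    exact sum_congr rfl fun i _ => by
      push_cast [ZMod.natCast_val, ZMod.cast_id]; ring
  rw [hcast2]
  -- the key ZMod 2 identity
  have hkey : dotZ m (m' + w) + qZ G (m' + w)
      = (dotZ m m' + qZ G m')
        + (∑ i, (m i + ∑ j ∈ G.neighborFinset i, m' j) * w i)
        + qZ G w := by
    rw [qZ_add]
    have h1 : dotZ m (m' + w) = dotZ m m' + dotZ m w := by
      rw [dotZ, dotZ, dotZ, ← Finset.sum_add_distrib]
      exact sum_congr rfl fun i _ => by simp only [Pi.add_apply]; ring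
    have h2 : ∑ i, (m i + ∑ j ∈ G.neighborFinset i, m' j) * w i
        = dotZ m w + ∑ i, (∑ j ∈ G.neighborFinset i, m' j) * w i := by
      rw [dotZ, ← Finset.sum_add_distrib]
      exact sum_congr rfl fun i _ => by ring
    rw [h1, h2]
    abel
  rw [hkey, chiSign_add, chiSign_add]
  have h2pow : (2 : ℂ) ^ (-(n : ℤ)) = (2 : ℂ) ^ (-(2 * (n : ℤ))) * (2 : ℂ) ^ n := by
    rw [show ((2 : ℂ) ^ n) = (2 : ℂ) ^ (n : ℤ) from (zpow_natCast 2 n).symm,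
      ← zpow_add₀ (two_ne_zero), show -(2 * (n : ℤ)) + n = -(n : ℤ) by ring]
  rw [h2pow]
  ring
end

section
/- Secrecy of the [N,N] parity-encoded quantum secret against every proper subset of clients: Let S and T be finite types with T nonempty, let n = |S| + |T|, and let α, β : ℂ satisfy |α|² + |β|² = 1 and α·conj(β) + conj(α)·β = 0 (i.e., α·conj(β) is purely imaginary). Let Ψ : ((S ⊕ T) → ZMod 2) → ℂ be the normalized parity-encoded state, Ψ(x) = 2^{−(n−1)/2}·(α if Σ x = 0 in ZMod 2 else β). Then the reduced density matrix on the shares S, with entries ρ(a, b) = Σ_{z : T → ZMod 2} Ψ(a ⊕ z) · conj(Ψ(b ⊕ z)) for a, b : S → ZMod 2 (where a ⊕ z denotes the combined assignment on S ⊕ T), is given by ρ(a, b) = 2^{−|S|} if Σ_{s∈S} a s = Σ_{s∈S} b s in ZMod 2, and ρ(a, b) = 0 otherwise. In particular ρ is completely independent of the secret (α, β), so no proper subset of the clients can obtain any information about the shared secret state. -/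
lemma zmod2_cases (x : ZMod 2) : x = 0 ∨ x = 1 := by revert x; decide

lemma fiber_count (T : Type*) [Fintype T] [DecidableEq T] [Nonempty T] (k : ZMod 2) :
    (Finset.univ.filter (fun z : T → ZMod 2 => ∑ t, z t = k)).card
      = 2 ^ (Fintype.card T - 1) := by
  classical
  have h2 : (2 : ZMod 2) = 0 := rfl
  have key : ∀ k : ZMod 2,
      (Finset.univ.filter (fun z : T → ZMod 2 => ∑ t, z t = k)).card
        = (Finset.univ.filter (fun z : T → ZMod 2 => ∑ t, z t = k + 1)).card := by
    intro k
    obtain ⟨t₀⟩ := ‹Nonempty T›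
    apply Finset.card_bij (fun z _ => Function.update z t₀ (z t₀ + 1))
    · intro z hz
      simp only [Finset.mem_filter, Finset.mem_univ, true_and] at hz ⊢
      rw [Finset.sum_update_of_mem (Finset.mem_univ t₀), Finset.sdiff_singleton_eq_erase]
      rw [← Finset.add_sum_erase _ _ (Finset.mem_univ t₀)] at hz
      linear_combination hz
    · intro z₁ h₁ z₂ h₂ h
      funext t
      by_cases ht : t = t₀
      · subst ht
        have := congrFun h t
        simp only [Function.update_self] at this
        exact add_right_cancel this
      · have := congrFun h t
        simpa [Function.update_of_ne ht] using this
    · intro z hz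
      simp only [Finset.mem_filter, Finset.mem_univ, true_and] at hz
      refine ⟨Function.update z t₀ (z t₀ + 1), ?_, ?_⟩
      · simp only [Finset.mem_filter, Finset.mem_univ, true_and]
        rw [Finset.sum_update_of_mem (Finset.mem_univ t₀), Finset.sdiff_singleton_eq_erase]
        rw [← Finset.add_sum_erase _ _ (Finset.mem_univ t₀)] at hz
        linear_combination hz + h2
      · funext t
        by_cases ht : t = t₀
        · subst ht
          simp only [Function.update_self]
          linear_combination h2
        · simp [Function.update_of_ne ht]
  have htot : (Finset.univ.filter (fun z : T → ZMod 2 => ∑ t, z t = 0)).card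
      + (Finset.univ.filter (fun z : T → ZMod 2 => ∑ t, z t = 1)).card
      = 2 ^ Fintype.card T := by
    have h1 : (Finset.univ.filter (fun z : T → ZMod 2 => ∑ t, z t = 1))
        = (Finset.univ.filter (fun z : T → ZMod 2 => ¬ (∑ t, z t = 0))) := by
      apply Finset.filter_congr
      intro z _
      rcases zmod2_cases (∑ t, z t) with h | h <;> simp [h]
    rw [h1, Finset.card_filter_add_card_filter_not]
    simp [Fintype.card_fun]
  have h01 := key 0
  norm_num at h01
  have hpos : 1 ≤ Fintype.card T := Fintype.card_pos
  obtain ⟨m, hm⟩ : ∃ m, Fintype.card T = m + 1 := ⟨_, (Nat.succ_pred_eq_of_pos hpos).symm⟩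
  rw [hm] at htot
  have hpow : 2 ^ (m + 1) = 2 * 2 ^ m := by ring
  rw [hpow] at htot
  rw [hm]; simp only [Nat.add_sub_cancel]
  have hA : (Finset.univ.filter (fun z : T → ZMod 2 => ∑ t, z t = 0)).card = 2 ^ m := by
    have h2A : 2 * (Finset.univ.filter (fun z : T → ZMod 2 => ∑ t, z t = 0)).card
        = 2 * 2 ^ m := by
      rw [two_mul]; nth_rewrite 2 [h01]; exact htot
    exact Nat.eq_of_mul_eq_mul_left (by norm_num) h2A
  have hB : (Finset.univ.filter (fun z : T → ZMod 2 => ∑ t, z t = 1)).card = 2 ^ m :=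
    h01 ▸ hA
  rcases zmod2_cases k with h | h <;> subst h
  · exact hA
  · exact hB

lemma sum_parity (T : Type*) [Fintype T] [DecidableEq T] [Nonempty T] (h : ZMod 2 → ℂ) :
    ∑ z : T → ZMod 2, h (∑ t, z t)
      = (2 ^ (Fintype.card T - 1) : ℕ) * (h 0 + h 1) := by
  classical
  rw [← Finset.sum_filter_add_sum_filter_not Finset.univ (fun z : T → ZMod 2 => ∑ t, z t = 0)]
  have e1 : ∑ z ∈ Finset.univ.filter (fun z : T → ZMod 2 => ∑ t, z t = 0), h (∑ t, z t)
      = (2 ^ (Fintype.card T - 1) : ℕ) * h 0 := by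
    rw [Finset.sum_congr rfl (fun z hz => by
      rw [(Finset.mem_filter.mp hz).2]), Finset.sum_const, fiber_count, nsmul_eq_mul]
  have e2 : ∑ z ∈ Finset.univ.filter (fun z : T → ZMod 2 => ¬ (∑ t, z t = 0)), h (∑ t, z t)
      = (2 ^ (Fintype.card T - 1) : ℕ) * h 1 := by
    have h1 : (Finset.univ.filter (fun z : T → ZMod 2 => ¬ (∑ t, z t = 0)))
        = (Finset.univ.filter (fun z : T → ZMod 2 => ∑ t, z t = 1)) := by
      apply Finset.filter_congr
      intro z _
      rcases zmod2_cases (∑ t, z t) with h | h <;> simp [h]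
    rw [h1, Finset.sum_congr rfl (fun z hz => by
      rw [(Finset.mem_filter.mp hz).2]), Finset.sum_const, fiber_count, nsmul_eq_mul]
  rw [e1, e2]; ring


/-- **Secrecy of the `[N,N]` parity-encoded quantum secret against every proper subset
of clients.**  Let `n = |S| + |T|` with `T` nonempty, and let the secret amplitudes
satisfy `|α|² + |β|² = 1` and `α·conj β + conj α·β = 0`.  For the normalized
parity-encoded state `Ψ(x) = 2^{−(n−1)/2}·(α if Σx = 0 else β)`, the reduced density
matrix on the shares `S` is `ρ(a,b) = 2^{−|S|}` if `Σ a = Σ b (mod 2)` and `0`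
otherwise; in particular it is independent of the secret `(α, β)`. -/
theorem parity_encoding_secrecy (S T : Type*) [Fintype S] [Fintype T] [DecidableEq T] [Nonempty T]
    (α β : ℂ)
    (hnorm : ‖α‖ ^ 2 + ‖β‖ ^ 2 = 1)
    (himag : α * (starRingEnd ℂ) β + (starRingEnd ℂ) α * β = 0)
    (Ψ : ((S ⊕ T) → ZMod 2) → ℂ)
    (hΨ : ∀ x, Ψ x =
      (((2 : ℝ) ^ (-(((Fintype.card S + Fintype.card T : ℕ) : ℝ) - 1) / 2) : ℝ) : ℂ) *
        (if (∑ i, x i) = 0 then α else β))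
    (a b : S → ZMod 2) :
    (∑ z : T → ZMod 2, Ψ (Sum.elim a z) * (starRingEnd ℂ) (Ψ (Sum.elim b z)))
      = if (∑ s, a s) = (∑ s, b s) then (2 : ℂ) ^ (-(Fintype.card S : ℤ)) else 0 := by
  classical
  set c : ℝ := ((2 : ℝ) ^ (-(((Fintype.card S + Fintype.card T : ℕ) : ℝ) - 1) / 2) : ℝ) with hc
  set sa := ∑ s, a s with hsa
  set sb := ∑ s, b s with hsb
  -- real arithmetic
  have hT1 : 1 ≤ Fintype.card T := Fintype.card_pos
  have hc2 : c * c = (2 : ℝ) ^ (-(((Fintype.card S + Fintype.card T : ℕ) : ℝ) - 1)) := by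
    rw [hc, ← Real.rpow_add (by norm_num : (0:ℝ) < 2)]
    congr 1; ring
  have hmain : (2 : ℝ) ^ (Fintype.card T - 1 : ℕ) * (c * c)
      = (2 : ℝ) ^ (-(Fintype.card S : ℤ)) := by
    rw [hc2, ← Real.rpow_natCast 2 (Fintype.card T - 1),
      ← Real.rpow_add (by norm_num : (0:ℝ) < 2), ← Real.rpow_intCast]
    congr 1
    rw [Nat.cast_sub hT1]
    push_cast
    ring
  have hcc : ((2 ^ (Fintype.card T - 1) : ℕ) : ℂ) * ((c : ℂ) * (c : ℂ))
      = (2 : ℂ) ^ (-(Fintype.card S : ℤ)) := by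
    rw [show ((2 ^ (Fintype.card T - 1) : ℕ) : ℂ) * ((c : ℂ) * (c : ℂ))
        = (((2 : ℝ) ^ (Fintype.card T - 1 : ℕ) * (c * c) : ℝ) : ℂ) by push_cast; ring,
      hmain, Complex.ofReal_zpow]
    norm_num
  have hone : α * (starRingEnd ℂ) α + β * (starRingEnd ℂ) β = 1 := by
    rw [Complex.mul_conj, Complex.mul_conj, ← Complex.ofReal_add,
      Complex.normSq_eq_norm_sq, Complex.normSq_eq_norm_sq, hnorm, Complex.ofReal_one]
  -- reduce the sum
  have hstep : (∑ z : T → ZMod 2, Ψ (Sum.elim a z) * (starRingEnd ℂ) (Ψ (Sum.elim b z)))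
      = ∑ z : T → ZMod 2,
          (fun k : ZMod 2 => ((c : ℂ) * (if sa + k = 0 then α else β)) *
            (starRingEnd ℂ) ((c : ℂ) * (if sb + k = 0 then α else β))) (∑ t, z t) := by
    apply Finset.sum_congr rfl
    intro z _
    have ha : (∑ i, Sum.elim a z i) = sa + ∑ t, z t := by
      rw [Fintype.sum_sum_type]; simp only [Sum.elim_inl, Sum.elim_inr]; rfl
    have hb : (∑ i, Sum.elim b z i) = sb + ∑ t, z t := by
      rw [Fintype.sum_sum_type]; simp only [Sum.elim_inl, Sum.elim_inr]; rfl
    rw [hΨ, hΨ, ha, hb]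
  rw [hstep, sum_parity T (fun k : ZMod 2 => ((c : ℂ) * (if sa + k = 0 then α else β)) *
    (starRingEnd ℂ) ((c : ℂ) * (if sb + k = 0 then α else β)))]
  simp only [add_zero]
  by_cases hab : sa = sb
  · rw [if_pos hab, ← hab]
    rcases zmod2_cases sa with h | h <;> rw [h] <;>
      simp only [zero_add, if_pos rfl, map_mul, Complex.conj_ofReal,
        if_neg (show (0:ZMod 2) + 1 ≠ 0 by decide),
        if_neg (show (1:ZMod 2) + 0 ≠ 0 by decide), if_neg (show (1:ZMod 2) ≠ 0 by decide),
        if_pos (show (1:ZMod 2) + 1 = 0 by decide)]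
    · calc ((2 ^ (Fintype.card T - 1) : ℕ) : ℂ) *
            ((c : ℂ) * α * ((c : ℂ) * (starRingEnd ℂ) α) +
              (c : ℂ) * β * ((c : ℂ) * (starRingEnd ℂ) β))
          = ((2 ^ (Fintype.card T - 1) : ℕ) : ℂ) * ((c : ℂ) * (c : ℂ)) *
            (α * (starRingEnd ℂ) α + β * (starRingEnd ℂ) β) := by ring
        _ = (2 : ℂ) ^ (-(Fintype.card S : ℤ)) := by rw [hcc, hone, mul_one]
    · calc ((2 ^ (Fintype.card T - 1) : ℕ) : ℂ) *
            ((c : ℂ) * β * ((c : ℂ) * (starRingEnd ℂ) β) +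
              (c : ℂ) * α * ((c : ℂ) * (starRingEnd ℂ) α))
          = ((2 ^ (Fintype.card T - 1) : ℕ) : ℂ) * ((c : ℂ) * (c : ℂ)) *
            (α * (starRingEnd ℂ) α + β * (starRingEnd ℂ) β) := by ring
        _ = (2 : ℂ) ^ (-(Fintype.card S : ℤ)) := by rw [hcc, hone, mul_one]
  · rw [if_neg hab]
    have hzero : ∀ u v : ℂ, u = α * (starRingEnd ℂ) β → v = β * (starRingEnd ℂ) α →
        ((2 ^ (Fintype.card T - 1) : ℕ) : ℂ) * ((c : ℂ) * (c : ℂ)) * (u + v) = 0 := by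
      intro u v hu hv
      rw [hu, hv, show α * (starRingEnd ℂ) β + β * (starRingEnd ℂ) α
        = α * (starRingEnd ℂ) β + (starRingEnd ℂ) α * β by ring, himag, mul_zero]
    rcases zmod2_cases sa with h | h <;> rcases zmod2_cases sb with h' | h' <;>
        rw [h, h'] at hab ⊢
    · exact absurd rfl hab
    · simp only [zero_add, if_pos rfl, map_mul, Complex.conj_ofReal,
        if_neg (show (1:ZMod 2) + 0 ≠ 0 by decide),
        if_neg (show (0:ZMod 2) + 1 ≠ 0 by decide),
        if_pos (show (1:ZMod 2) + 1 = 0 by decide)]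
      calc ((2 ^ (Fintype.card T - 1) : ℕ) : ℂ) *
            ((c : ℂ) * α * ((c : ℂ) * (starRingEnd ℂ) β) +
              (c : ℂ) * β * ((c : ℂ) * (starRingEnd ℂ) α))
          = ((2 ^ (Fintype.card T - 1) : ℕ) : ℂ) * ((c : ℂ) * (c : ℂ)) *
            (α * (starRingEnd ℂ) β + β * (starRingEnd ℂ) α) := by ring
        _ = 0 := hzero _ _ rfl rfl
    · simp only [zero_add, if_pos rfl, map_mul, Complex.conj_ofReal,
        if_neg (show (1:ZMod 2) + 0 ≠ 0 by decide),
        if_neg (show (0:ZMod 2) + 1 ≠ 0 by decide),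
        if_pos (show (1:ZMod 2) + 1 = 0 by decide)]
      calc ((2 ^ (Fintype.card T - 1) : ℕ) : ℂ) *
            ((c : ℂ) * β * ((c : ℂ) * (starRingEnd ℂ) α) +
              (c : ℂ) * α * ((c : ℂ) * (starRingEnd ℂ) β))
          = ((2 ^ (Fintype.card T - 1) : ℕ) : ℂ) * ((c : ℂ) * (c : ℂ)) *
            (α * (starRingEnd ℂ) β + β * (starRingEnd ℂ) α) := by ring
        _ = 0 := hzero _ _ rfl rfl
    · exact absurd rfl hab
end

section
/- Upper bound on shot usage given unlimited memory (Theorem 2, existence part): For every distribution instance (G_N, W_c, G_S, α_D) in which G_N is connected and V_N is nonempty, there exists a natural number N ≤ ⌊|V_S|/2⌋ and a valid N-shot Bell pair strategy for the instance. -/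
/-- A one-shot Bell pair strategy on the network `(G_N, W_c)` for a graph state with
vertex type `V_S`: it assigns to each oriented channel `(u,v)` and each graph-state
vertex `s` a value in `{-1, 0, 1}`, antisymmetrically in the orientation, vanishing off
the channels of the network, and such that each channel `e` is used at most `W_c e`
times in total. -/
structure OneShotStrategy (V_N V_S : Type*) [Fintype V_S]
    (G_N : SimpleGraph V_N) (W_c : Sym2 V_N → ℕ) where
  b : V_N → V_N → V_S → ℤ
  antisymm : ∀ u v s, b u v s = - b v u s
  bounded : ∀ u v s, |b u v s| ≤ 1
  supported : ∀ u v, ¬ G_N.Adj u v → ∀ s, b u v s = 0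
  capacity : ∀ u v, G_N.Adj u v →
    (∑ s : V_S, |b u v s|) ≤ (W_c s(u, v) : ℤ)

/-- The reachable set of the graph-state vertex `s` under the `N`-shot strategy `bs`:
the smallest set of network nodes containing the assigned node `αD s` and closed under
following, from a reached node `u`, any positively-assigned oriented channel `(u,v)` of
any of the one-shot strategies in `bs`. -/
inductive Reachable {V_N V_S : Type*} [Fintype V_S] {G_N : SimpleGraph V_N}
    {W_c : Sym2 V_N → ℕ} (bs : List (OneShotStrategy V_N V_S G_N W_c))
    (αD : V_S → V_N) (s : V_S) : V_N → Prop
  | base : Reachable bs αD s (αD s)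
  | step {u v : V_N} (bk : OneShotStrategy V_N V_S G_N W_c) :
      Reachable bs αD s u → bk ∈ bs → 0 < bk.b u v s → Reachable bs αD s v

/-- An `N`-shot strategy `bs` is valid for the instance `(G_N, W_c, G_S, αD)` if for
every edge `s₁s₂` of the graph state the reachable sets of `s₁` and `s₂` intersect. -/
def IsValid {V_N V_S : Type*} [Fintype V_S] {G_N : SimpleGraph V_N}
    {W_c : Sym2 V_N → ℕ} (bs : List (OneShotStrategy V_N V_S G_N W_c))
    (G_S : SimpleGraph V_S) (αD : V_S → V_N) : Prop :=
  ∀ s₁ s₂, G_S.Adj s₁ s₂ → ∃ n, Reachable bs αD s₁ n ∧ Reachable bs αD s₂ n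


open Finset in
open scoped Classical in
lemma routing_aux {V_N V_S : Type*} [Fintype V_N] [Fintype V_S] (G : SimpleGraph V_N) :
    ∀ (m : ℕ) (S : Finset V_N) (f : V_S → V_N), S.card ≤ m → S.Nonempty →
    (∀ x ∈ S, ∀ y ∈ S, ∃ w : G.Walk x y, ∀ z ∈ w.support, z ∈ S) →
    (∀ s, f s ∈ S) →
    ∃ (r : V_N) (p : ∀ s : V_S, G.Walk (f s) r),
      r ∈ S ∧ (∀ s, (p s).IsTrail) ∧ (∀ s, ∀ z ∈ (p s).support, z ∈ S) ∧
      (∀ e : Sym2 V_N,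
        (univ.filter (fun s => e ∈ (p s).edges)).card ≤ Fintype.card V_S / 2) := by
  intro m
  induction m with
  | zero =>
      intro S f hcard hne _ _
      exact absurd (Finset.card_pos.mpr hne) (by omega)
  | succ m ih =>
      intro S f hcard hne hconn hf
      obtain ⟨u₀, hu₀⟩ := hne
      by_cases hS1 : S.card = 1
      · -- singleton case
        obtain ⟨w0, rfl⟩ := Finset.card_eq_one.mp hS1
        have hfs : ∀ s, f s = w0 := fun s => Finset.mem_singleton.mp (hf s)
        refine ⟨w0, fun s => SimpleGraph.Walk.nil.copy (hfs s).symm rfl, Finset.mem_singleton_self _,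
          ?_, ?_, ?_⟩
        · intro s; simp [SimpleGraph.Walk.isTrail_def, SimpleGraph.Walk.edges_copy]
        · intro s z hz
          simp [SimpleGraph.Walk.support_copy] at hz
          simp [hz]
        · intro e
          have : (univ.filter (fun s : V_S => e ∈ ((SimpleGraph.Walk.nil.copy (hfs s).symm rfl : G.Walk (f s) w0)).edges)) = ∅ := by
            apply Finset.filter_false_of_mem
            intro s _
            simp [SimpleGraph.Walk.edges_copy]
          rw [this]; simp
      · -- |S| ≥ 2
        have hS2 : 2 ≤ S.card := by
          have hpos : 0 < S.card := Finset.card_pos.mpr ⟨u₀, hu₀⟩; omega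
        -- distances within S from u₀
        have hPex : ∀ x ∈ S, ∃ ℓ : ℕ, ∃ w : G.Walk u₀ x,
            (∀ z ∈ w.support, z ∈ S) ∧ w.length = ℓ := by
          intro x hx
          obtain ⟨w, hw⟩ := hconn u₀ hu₀ x hx
          exact ⟨w.length, w, hw, rfl⟩
        set d : V_N → ℕ := fun x =>
          if h : ∃ ℓ : ℕ, ∃ w : G.Walk u₀ x, (∀ z ∈ w.support, z ∈ S) ∧ w.length = ℓ
          then Nat.find h else 0 with hd_def
        have hd_spec : ∀ x ∈ S, ∃ w : G.Walk u₀ x,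
            (∀ z ∈ w.support, z ∈ S) ∧ w.length = d x := by
          intro x hx
          have h := hPex x hx
          simp only [hd_def, dif_pos h]
          exact Nat.find_spec h
        have hd_min : ∀ x, ∀ w : G.Walk u₀ x, (∀ z ∈ w.support, z ∈ S) →
            d x ≤ w.length := by
          intro x w hwS
          have h : ∃ ℓ : ℕ, ∃ w' : G.Walk u₀ x, (∀ z ∈ w'.support, z ∈ S) ∧ w'.length = ℓ :=
            ⟨w.length, w, hwS, rfl⟩
          simp only [hd_def, dif_pos h]
          exact Nat.find_min' h ⟨w, hwS, rfl⟩
        have hdu₀ : d u₀ = 0 := by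
          have := hd_min u₀ SimpleGraph.Walk.nil (by simp [hu₀])
          simpa using this
        obtain ⟨v, hvS, hvmax⟩ := Finset.exists_max_image S d ⟨u₀, hu₀⟩
        -- v has positive distance, in particular v ≠ u₀
        have hdv : 1 ≤ d v := by
          obtain ⟨x, hxS, hxne⟩ := Finset.exists_mem_ne (s := S) (by omega) u₀
          have hdx : 1 ≤ d x := by
            by_contra h
            obtain ⟨w, hwS, hwl⟩ := hd_spec x hxS
            have : w.length = 0 := by omega
            exact hxne (SimpleGraph.Walk.eq_of_length_eq_zero this).symm
          exact le_trans hdx (hvmax x hxS)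
        have hvne : v ≠ u₀ := by
          intro h; rw [h, hdu₀] at hdv; omega
        -- minimal walks from u₀ avoid v
        have havoid : ∀ x ∈ S, x ≠ v → ∃ w : G.Walk u₀ x,
            (∀ z ∈ w.support, z ∈ S) ∧ v ∉ w.support := by
          intro x hxS hxv
          obtain ⟨w, hwS, hwl⟩ := hd_spec x hxS
          refine ⟨w, hwS, ?_⟩
          intro hv
          have hsplit := w.take_spec hv
          have hlen : (w.takeUntil v hv).length + (w.dropUntil v hv).length = d x := by
            have hcong := congrArg SimpleGraph.Walk.length hsplit
            rw [SimpleGraph.Walk.length_append] at hcong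
            omega
          have h1 : d v ≤ (w.takeUntil v hv).length :=
            hd_min v _ (fun z hz => hwS z (SimpleGraph.Walk.support_takeUntil_subset _ hv hz))
          have h2 : 1 ≤ (w.dropUntil v hv).length := by
            by_contra h
            have : (w.dropUntil v hv).length = 0 := by omega
            exact hxv (SimpleGraph.Walk.eq_of_length_eq_zero this).symm
          have := hvmax x hxS
          omega
        -- S' = S erase v, still connected
        set S' : Finset V_N := S.erase v with hS'def
        have hu₀' : u₀ ∈ S' := Finset.mem_erase.mpr ⟨Ne.symm hvne, hu₀⟩
        have hconn' : ∀ x ∈ S', ∀ y ∈ S', ∃ w : G.Walk x y, ∀ z ∈ w.support, z ∈ S' := by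
          intro x hx y hy
          obtain ⟨wx, hwxS, hwxv⟩ := havoid x (Finset.mem_of_mem_erase hx)
            (Finset.ne_of_mem_erase hx)
          obtain ⟨wy, hwyS, hwyv⟩ := havoid y (Finset.mem_of_mem_erase hy)
            (Finset.ne_of_mem_erase hy)
          refine ⟨wx.reverse.append wy, ?_⟩
          intro z hz
          rw [SimpleGraph.Walk.mem_support_append_iff] at hz
          rcases hz with hz | hz
          · rw [SimpleGraph.Walk.support_reverse, List.mem_reverse] at hz
            exact Finset.mem_erase.mpr ⟨fun h => hwxv (h ▸ hz), hwxS z hz⟩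
          · exact Finset.mem_erase.mpr ⟨fun h => hwyv (h ▸ hz), hwyS z hz⟩
        -- a neighbor u of v inside S'
        obtain ⟨wv, hwvS⟩ := hconn v hvS u₀ hu₀
        have hu : ∃ u : V_N, G.Adj v u ∧ u ∈ S' := by
          cases wv with
          | nil => exact absurd rfl hvne
          | @cons _ u _ h w' =>
              refine ⟨u, h, Finset.mem_erase.mpr ⟨(G.ne_of_adj h).symm, ?_⟩⟩
              exact hwvS u (by simp [SimpleGraph.Walk.support_cons,
                SimpleGraph.Walk.start_mem_support])
        obtain ⟨u, hvu, huS'⟩ := hu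
        set n := Fintype.card V_S with hn
        set k := (univ.filter (fun s : V_S => f s = v)).card with hk_def
        have hkn : k ≤ n := by
          rw [hk_def, hn]; exact Finset.card_filter_le _ _
        by_cases hk : k ≤ n / 2
        · -- move pebbles at v to u, recurse on S'
          have hcard' : S'.card ≤ m := by
            rw [hS'def, Finset.card_erase_of_mem hvS]; omega
          set f' : V_S → V_N := fun s => if f s = v then u else f s with hf'def
          have hf' : ∀ s, f' s ∈ S' := by
            intro s
            by_cases h : f s = v
            · simp only [hf'def, if_pos h]; exact huS'
            · simp only [hf'def, if_neg h]
              exact Finset.mem_erase.mpr ⟨h, hf s⟩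
          obtain ⟨r, p', hrS', htrail', hsupp', hcong'⟩ :=
            ih S' f' hcard' ⟨u₀, hu₀'⟩ hconn' hf'
          have hveq : ∀ s, f s = v → f' s = u := by
            intro s h; simp only [hf'def, if_pos h]
          have hneq : ∀ s, f s ≠ v → f' s = f s := by
            intro s h; simp only [hf'def, if_neg h]
          set p : ∀ s : V_S, G.Walk (f s) r := fun s =>
            if h : f s = v then
              (SimpleGraph.Walk.cons hvu ((p' s).copy (hveq s h) rfl)).copy h.symm rfl
            else (p' s).copy (hneq s h) rfl with hp_def
          have hedge : ∀ s, (p s).edges =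
              if f s = v then s(v, u) :: (p' s).edges else (p' s).edges := by
            intro s
            by_cases h : f s = v
            · rw [if_pos h]
              simp only [hp_def, dif_pos h, SimpleGraph.Walk.edges_copy,
                SimpleGraph.Walk.edges_cons]
            · rw [if_neg h]
              simp only [hp_def, dif_neg h, SimpleGraph.Walk.edges_copy]
          have hnotin : ∀ s, s(v, u) ∉ (p' s).edges := by
            intro s hmem
            have hv' : v ∈ (p' s).support :=
              SimpleGraph.Walk.fst_mem_support_of_mem_edges _ hmem
            exact Finset.notMem_erase v S (hsupp' s v hv')
          refine ⟨r, p, Finset.mem_of_mem_erase hrS', ?_, ?_, ?_⟩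
          · intro s
            rw [SimpleGraph.Walk.isTrail_def, hedge s]
            by_cases h : f s = v
            · rw [if_pos h]
              exact List.nodup_cons.mpr ⟨hnotin s, (htrail' s).edges_nodup⟩
            · rw [if_neg h]; exact (htrail' s).edges_nodup
          · intro s z hz
            by_cases h : f s = v
            · simp only [hp_def, dif_pos h, SimpleGraph.Walk.support_copy,
                SimpleGraph.Walk.support_cons, List.mem_cons] at hz
              rcases hz with rfl | hz
              · exact hvS
              · exact Finset.mem_of_mem_erase (hsupp' s z hz)
            · simp only [hp_def, dif_neg h, SimpleGraph.Walk.support_copy] at hz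
              exact Finset.mem_of_mem_erase (hsupp' s z hz)
          · intro e
            by_cases he : e = s(v, u)
            · subst he
              have : (univ.filter (fun s : V_S => s(v, u) ∈ (p s).edges))
                  = univ.filter (fun s : V_S => f s = v) := by
                apply Finset.filter_congr
                intro s _
                rw [hedge s]
                constructor
                · intro hmem
                  by_contra h
                  rw [if_neg h] at hmem
                  exact hnotin s hmem
                · intro h
                  rw [if_pos h]; exact List.mem_cons_self
              rw [this]; exact hk
            · have : (univ.filter (fun s : V_S => e ∈ (p s).edges))
                  = univ.filter (fun s : V_S => e ∈ (p' s).edges) := by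
                apply Finset.filter_congr
                intro s _
                rw [hedge s]
                by_cases h : f s = v
                · rw [if_pos h]
                  simp [List.mem_cons, he]
                · rw [if_neg h]
              rw [this]; exact hcong' e
        · -- majority of pebbles at v : meet at v
          push_neg at hk
          have hw : ∀ s, ∃ w : G.Walk (f s) v, ∀ z ∈ w.support, z ∈ S :=
            fun s => hconn (f s) (hf s) v hvS
          set p : ∀ s : V_S, G.Walk (f s) v := fun s =>
            if h : f s = v then SimpleGraph.Walk.nil.copy h.symm rfl
            else (hw s).choose.bypass with hp_def
          have hedge0 : ∀ s, f s = v → (p s).edges = [] := by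
            intro s h
            simp [hp_def, dif_pos h, SimpleGraph.Walk.edges_copy]
          refine ⟨v, p, hvS, ?_, ?_, ?_⟩
          · intro s
            by_cases h : f s = v
            · rw [SimpleGraph.Walk.isTrail_def, hedge0 s h]; exact List.nodup_nil
            · simp only [hp_def, dif_neg h]
              exact (SimpleGraph.Walk.bypass_isPath _).isTrail
          · intro s z hz
            by_cases h : f s = v
            · simp only [hp_def, dif_pos h, SimpleGraph.Walk.support_copy] at hz
              simp at hz
              rw [hz]; exact hvS
            · simp only [hp_def, dif_neg h] at hz
              exact (hw s).choose_spec z (SimpleGraph.Walk.support_bypass_subset _ hz)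
          · intro e
            have hsub : (univ.filter (fun s : V_S => e ∈ (p s).edges))
                ⊆ univ.filter (fun s : V_S => ¬ (f s = v)) := by
              intro s hs
              simp only [Finset.mem_filter, Finset.mem_univ, true_and] at hs ⊢
              intro h
              rw [hedge0 s h] at hs
              simp at hs
            have hle := Finset.card_le_card hsub
            have hsplit := Finset.card_filter_add_card_filter_not
              (s := (univ : Finset V_S)) (p := fun s : V_S => f s = v)
            rw [Finset.card_univ] at hsplit
            omega

/-- **Upper bound on shot usage given unlimited memory (existence part).**
For every distribution instance with connected network, some valid `N`-shot Bell pair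
strategy exists with `N ≤ ⌊|V_S|/2⌋`. -/
theorem shot_usage_upper_bound {V_N V_S : Type*} [Fintype V_N] [Fintype V_S]
    (G_N : SimpleGraph V_N) (hconn : G_N.Connected)
    (W_c : Sym2 V_N → ℕ) (hW : ∀ e ∈ G_N.edgeSet, 1 ≤ W_c e)
    (G_S : SimpleGraph V_S) (αD : V_S → V_N) :
    ∃ bs : List (OneShotStrategy V_N V_S G_N W_c),
      bs.length ≤ Fintype.card V_S / 2 ∧ IsValid bs G_S αD := by
  classical
  have hVN : Nonempty V_N := hconn.nonempty
  obtain ⟨r, p, -, htrail, -, hcong⟩ :=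
    routing_aux G_N (Fintype.card V_N) Finset.univ αD le_rfl Finset.univ_nonempty
      (fun x _ y _ => by
        obtain ⟨w⟩ := hconn.preconnected x y
        exact ⟨w, fun z _ => Finset.mem_univ z⟩)
      (fun s => Finset.mem_univ _)
  set N := Fintype.card V_S / 2 with hN
  set ι : V_S ≃ Fin (Fintype.card V_S) := Fintype.equivFin V_S with hι
  set F : Sym2 V_N → Finset V_S :=
    fun e => Finset.univ.filter (fun t => e ∈ (p t).edges) with hF
  set rank : V_S → Sym2 V_N → ℕ :=
    fun s e => ((F e).filter (fun t => ι t < ι s)).card with hrank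
  set cross : V_S → V_N → V_N → Prop :=
    fun s x y => ∃ d ∈ (p s).darts, d.toProd = (x, y) with hcross
  -- basic facts
  have hFcard : ∀ e, (F e).card ≤ N := fun e => hcong e
  have hmemF : ∀ s e, s ∈ F e ↔ e ∈ (p s).edges := by
    intro s e; simp [hF]
  have hrank_lt : ∀ s e, s ∈ F e → rank s e < N := by
    intro s e hs
    have h1 : ((F e).filter (fun t => ι t < ι s)) ⊆ (F e).erase s := by
      intro t ht
      rw [Finset.mem_filter] at ht
      exact Finset.mem_erase.mpr ⟨fun h => by simp [h] at ht, ht.1⟩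
    have h2 := Finset.card_le_card h1
    have h3 := Finset.card_erase_of_mem hs
    have h4 := Finset.card_pos.mpr ⟨s, hs⟩
    have h5 := hFcard e
    simp only [hrank]
    omega
  have hrank_inj : ∀ s t e, s ∈ F e → t ∈ F e → rank s e = rank t e → s = t := by
    intro s t e hs ht heq
    rcases lt_trichotomy (ι s) (ι t) with h | h | h
    · exfalso
      have : rank s e < rank t e := by
        apply Finset.card_lt_card
        constructor
        · intro x hx
          rw [Finset.mem_filter] at hx ⊢
          exact ⟨hx.1, lt_trans hx.2 h⟩
        · intro hsub
          have : s ∈ (F e).filter (fun x => ι x < ι t) := Finset.mem_filter.mpr ⟨hs, h⟩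
          have := Finset.mem_filter.mp (hsub this)
          simp at this
      omega
    · exact ι.injective (Fin.ext (by omega))
    · exfalso
      have : rank t e < rank s e := by
        apply Finset.card_lt_card
        constructor
        · intro x hx
          rw [Finset.mem_filter] at hx ⊢
          exact ⟨hx.1, lt_trans hx.2 h⟩
        · intro hsub
          have : t ∈ (F e).filter (fun x => ι x < ι s) := Finset.mem_filter.mpr ⟨ht, h⟩
          have := Finset.mem_filter.mp (hsub this)
          simp at this
      omega
  have hcross_adj : ∀ s x y, cross s x y → G_N.Adj x y := by
    rintro s x y ⟨d, _, hdp⟩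
    have h := d.adj
    rw [hdp] at h
    exact h
  have hcross_edge : ∀ s x y, cross s x y → s(x, y) ∈ (p s).edges := by
    rintro s x y ⟨d, hd, hdp⟩
    have hde : d.edge = s(x, y) := SimpleGraph.dart_edge_eq_mk'_iff.mpr (Or.inl hdp)
    rw [← hde]
    exact List.mem_map_of_mem hd
  have hcross_asym : ∀ s x y, cross s x y → cross s y x → False := by
    rintro s x y ⟨d₁, hd₁, hdp₁⟩ ⟨d₂, hd₂, hdp₂⟩
    have hxy : x ≠ y := by
      have h := d₁.adj; rw [hdp₁] at h; exact G_N.ne_of_adj h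
    have hnodup : ((p s).darts.map SimpleGraph.Dart.edge).Nodup := (htrail s).edges_nodup
    have heq : d₁ = d₂ := by
      apply List.inj_on_of_nodup_map hnodup hd₁ hd₂
      have e1 : d₁.edge = s(x, y) := SimpleGraph.dart_edge_eq_mk'_iff.mpr (Or.inl hdp₁)
      have e2 : d₂.edge = s(y, x) := SimpleGraph.dart_edge_eq_mk'_iff.mpr (Or.inl hdp₂)
      rw [e1, e2]
      exact Sym2.eq_swap
    rw [heq, hdp₂] at hdp₁
    exact hxy ((Prod.ext_iff.mp hdp₁).1).symm
  have hedge_cross : ∀ s x y, s(x, y) ∈ (p s).edges → cross s x y ∨ cross s y x := by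
    intro s x y hmem
    obtain ⟨d, hd, hde⟩ := List.mem_map.mp hmem
    rw [SimpleGraph.dart_edge_eq_mk'_iff'] at hde
    rcases hde with h | h
    · exact Or.inl ⟨d, hd, Prod.ext_iff.mpr ⟨h.1, h.2⟩⟩
    · exact Or.inr ⟨d, hd, Prod.ext_iff.mpr ⟨h.1, h.2⟩⟩
  -- the strategies
  set bfun : ℕ → V_N → V_N → V_S → ℤ := fun K x y s =>
    if cross s x y ∧ rank s s(x, y) = K then 1
    else if cross s y x ∧ rank s s(x, y) = K then -1 else 0 with hbfun
  let hstrat : ℕ → OneShotStrategy V_N V_S G_N W_c := fun K =>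
    { b := bfun K
      antisymm := by
        intro x y s
        have hsw : s(y, x) = s(x, y) := Sym2.eq_swap
        simp only [hbfun, hsw]
        by_cases hA : cross s x y ∧ rank s s(x, y) = K <;>
          by_cases hB : cross s y x ∧ rank s s(x, y) = K
        · exact absurd (hcross_asym s x y hA.1 hB.1) (by simp)
        · have hn : ¬ cross s y x := fun h => hcross_asym s x y hA.1 h
          simp [hA, hA.1, hA.2, hn]
        · have hn : ¬ cross s x y := fun h => hcross_asym s x y h hB.1
          simp [hB, hB.1, hB.2, hn]
        · simp [hA, hB]
      bounded := by
        intro x y s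
        simp only [hbfun]
        split_ifs <;> simp
      supported := by
        intro x y hadj s
        simp only [hbfun]
        rw [if_neg, if_neg]
        · rintro ⟨h, -⟩; exact hadj (hcross_adj s y x h).symm
        · rintro ⟨h, -⟩; exact hadj (hcross_adj s x y h)
      capacity := by
        intro x y hadj
        have hrw : ∀ s : V_S, |bfun K x y s| =
            if s ∈ F s(x, y) ∧ rank s s(x, y) = K then 1 else 0 := by
          intro s
          simp only [hbfun]
          by_cases hA : cross s x y ∧ rank s s(x, y) = K
          · rw [if_pos hA, if_pos ⟨(hmemF s _).mpr (hcross_edge s x y hA.1), hA.2⟩]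
            simp
          · rw [if_neg hA]
            by_cases hB : cross s y x ∧ rank s s(x, y) = K
            · rw [if_pos hB, if_pos ⟨(hmemF s _).mpr (by
                rw [Sym2.eq_swap]; exact hcross_edge s y x hB.1), hB.2⟩]
              simp
            · rw [if_neg hB, if_neg]
              · simp
              · rintro ⟨hsF, hrk⟩
                rcases hedge_cross s x y ((hmemF s _).mp hsF) with h | h
                · exact hA ⟨h, hrk⟩
                · exact hB ⟨h, hrk⟩
        calc (∑ s : V_S, |bfun K x y s|)
            = ∑ s : V_S, (if s ∈ F s(x, y) ∧ rank s s(x, y) = K then (1 : ℤ) else 0) := by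
              exact Finset.sum_congr rfl (fun s _ => hrw s)
          _ = ((Finset.univ.filter
                (fun s : V_S => s ∈ F s(x, y) ∧ rank s s(x, y) = K)).card : ℤ) := by
              rw [Finset.sum_boole]
          _ ≤ 1 := by
              have hc : (Finset.univ.filter
                  (fun s : V_S => s ∈ F s(x, y) ∧ rank s s(x, y) = K)).card ≤ 1 := by
                apply Finset.card_le_one.mpr
                intro a ha b hb
                rw [Finset.mem_filter] at ha hb
                exact hrank_inj a b s(x, y) ha.2.1 hb.2.1 (ha.2.2.trans hb.2.2.symm)
              exact_mod_cast hc
          _ ≤ (W_c s(x, y) : ℤ) := by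
              have := hW s(x, y) hadj
              exact_mod_cast this }
  set bs : List (OneShotStrategy V_N V_S G_N W_c) :=
    (List.range N).map (fun K => hstrat K) with hbs
  have hstrat_b : ∀ K x y s, (hstrat K).b x y s = bfun K x y s := fun _ _ _ _ => rfl
  refine ⟨bs, by simp [hbs], ?_⟩
  -- validity : every pebble reaches r
  have hreach : ∀ s : V_S, Reachable bs αD s r := by
    intro s
    have key : ∀ {x y : V_N} (w : G_N.Walk x y),
        (∀ d ∈ w.darts, ∃ bk ∈ bs, 0 < bk.b d.toProd.1 d.toProd.2 s) →
        Reachable bs αD s x → Reachable bs αD s y := by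
      intro x y w
      induction w with
      | nil => exact fun _ h => h
      | cons hadj wtail ihw =>
          intro hd hx
          obtain ⟨bk, hbk, hpos⟩ := hd _
            (by rw [SimpleGraph.Walk.darts_cons]; exact List.mem_cons_self)
          exact ihw (fun d hdd => hd d
            (by rw [SimpleGraph.Walk.darts_cons]; exact List.mem_cons_of_mem _ hdd))
            (Reachable.step bk hx hbk hpos)
    apply key (p s) ?_ Reachable.base
    intro d hd
    have hcr : cross s d.toProd.1 d.toProd.2 := ⟨d, hd, rfl⟩
    have hsF : s ∈ F s(d.toProd.1, d.toProd.2) :=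
      (hmemF s _).mpr (hcross_edge s _ _ hcr)
    have hKlt : rank s s(d.toProd.1, d.toProd.2) < N := hrank_lt s _ hsF
    refine ⟨hstrat (rank s s(d.toProd.1, d.toProd.2)), ?_, ?_⟩
    · rw [hbs]; exact List.mem_map.mpr ⟨_, List.mem_range.mpr hKlt, rfl⟩
    · have hone : bfun (rank s s(d.toProd.1, d.toProd.2)) d.toProd.1 d.toProd.2 s = 1 := by
        simp [hbfun, hcr]
      rw [hstrat_b, hone]
      norm_num
  intro s₁ s₂ _
  exact ⟨r, hreach s₁, hreach s₂⟩
end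

section
/- Center-assigned one-shot distribution of a star graph state is equivalent to the Steiner tree problem (the correspondence established in the proof of Theorem 1, part 1): Let G be a finite simple graph, let the network be G_N = G with all channel widths equal to 1, let the graph state G_S be a star graph with center c₀ whose edge set is {c₀ s : s ∈ V_S, s ≠ c₀}, let S ⊆ V(G) be a set of nodes with |S| = |V_S|, and let α_D : V_S → V(G) be a bijection onto S. Then for every natural number m the following are equivalent: (i) there exists a valid one-shot Bell pair strategy b for this instance such that b((u,v), s) = 0 for every s ≠ c₀ and the number of channels e with b(e, c₀) ≠ 0 is at most m; (ii) G contains a connected subgraph H with at most m edges whose vertex set contains S. -/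
private lemma walk_cons_decomp {V : Type*} {G : SimpleGraph V} {a b : V}
    (p : G.Walk a b) (h : p.length ≠ 0) :
    ∃ (x : V) (hadj : G.Adj a x) (r : G.Walk x b), p.length = r.length + 1 := by
  cases p with
  | nil => simp at h
  | cons hadj r => exact ⟨_, hadj, r, by simp⟩

/-- **Center-assigned one-shot distribution of a star graph state is equivalent to the
Steiner tree problem.**  With the network `G` (all widths `1`), a star graph state with
center `c₀`, and `αD` a bijection from `V_S` onto a terminal set `S ⊆ V(G)`, there is a
valid one-shot strategy assigning all channels to the center and using at most `m`
channels iff `G` contains a connected subgraph with at most `m` edges whose vertex set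
contains `S`. -/
theorem star_distribution_iff_steiner_tree {V V_S : Type*} [Fintype V] [DecidableEq V]
    [Fintype V_S] (G : SimpleGraph V)
    (G_S : SimpleGraph V_S) (c₀ : V_S)
    (hstar : ∀ s₁ s₂, G_S.Adj s₁ s₂ ↔
      (s₁ = c₀ ∧ s₂ ≠ c₀) ∨ (s₂ = c₀ ∧ s₁ ≠ c₀))
    (S : Finset V) (hScard : S.card = Fintype.card V_S)
    (αD : V_S → V) (hinj : Function.Injective αD)
    (himg : ∀ v, v ∈ S ↔ ∃ s, αD s = v)
    (m : ℕ) :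
    (∃ b : OneShotStrategy V V_S G (fun _ => 1),
        IsValid [b] G_S αD ∧ (∀ u v s, s ≠ c₀ → b.b u v s = 0) ∧
        {e : Sym2 V | ∃ u v, e = s(u, v) ∧ b.b u v c₀ ≠ 0}.ncard ≤ m)
      ↔ (∃ H : G.Subgraph, H.Connected ∧ H.edgeSet.ncard ≤ m ∧ ↑S ⊆ H.verts) := by
  classical
  constructor
  · rintro ⟨b, hvalid, hzero, hcard⟩
    -- Reachable set of any non-center vertex is a singleton
    have hreach_s : ∀ s, s ≠ c₀ → ∀ n, Reachable [b] αD s n → n = αD s := by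
      intro s hs n hn
      induction hn with
      | base => rfl
      | step bk h hmem hpos ih =>
        rw [List.mem_singleton] at hmem
        subst hmem
        rw [hzero _ _ _ hs] at hpos
        exact absurd hpos (lt_irrefl 0)
    let H : G.Subgraph :=
      { verts := {v | Reachable [b] αD c₀ v}
        Adj := fun u v => (0 < b.b u v c₀ ∧ Reachable [b] αD c₀ u) ∨
                          (0 < b.b v u c₀ ∧ Reachable [b] αD c₀ v)
        adj_sub := by
          rintro u v (⟨hpos, _⟩ | ⟨hpos, _⟩)
          · by_contra hadj
            rw [b.supported u v hadj c₀] at hpos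
            exact absurd hpos (lt_irrefl 0)
          · by_contra hadj
            rw [b.supported v u (fun h => hadj h.symm) c₀] at hpos
            exact absurd hpos (lt_irrefl 0)
        edge_vert := by
          rintro u v (⟨hpos, hu⟩ | ⟨hpos, hv⟩)
          · exact hu
          · exact Reachable.step b hv (List.mem_singleton_self b) hpos
        symm := by
          refine ⟨?_⟩
          rintro u v (h | h)
          · exact Or.inr h
          · exact Or.inl h }
    have key : ∀ v, Reachable [b] αD c₀ v → ∀ (h : v ∈ H.verts),
        H.coe.Reachable ⟨αD c₀, Reachable.base⟩ ⟨v, h⟩ := by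
      intro v hv
      induction hv with
      | base => intro h; rfl
      | @step u w bk hu hmem hpos ih =>
        intro h
        rw [List.mem_singleton] at hmem
        subst hmem
        have hadjH : H.Adj u w := Or.inl ⟨hpos, hu⟩
        have hadj : H.coe.Adj ⟨u, hu⟩ ⟨w, h⟩ := hadjH
        exact (ih hu).trans hadj.reachable
    refine ⟨H, ?_, ?_, ?_⟩
    · haveI : Nonempty H.verts := ⟨⟨αD c₀, Reachable.base⟩⟩
      refine ⟨⟨?_⟩⟩
      rintro ⟨x, hx⟩ ⟨y, hy⟩
      exact (key x hx hx).symm.trans (key y hy hy)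
    · refine le_trans (Set.ncard_le_ncard ?_ (Set.toFinite _)) hcard
      intro e he
      induction e using Sym2.ind with
      | _ u v =>
        rw [SimpleGraph.Subgraph.mem_edgeSet] at he
        rcases he with ⟨hpos, _⟩ | ⟨hpos, _⟩
        · exact ⟨u, v, rfl, hpos.ne'⟩
        · exact ⟨v, u, Sym2.eq_swap, hpos.ne'⟩
    · intro v hv
      obtain ⟨s, rfl⟩ := (himg v).mp hv
      by_cases hs : s = c₀
      · subst hs; exact Reachable.base
      · have hadj : G_S.Adj c₀ s := (hstar c₀ s).mpr (Or.inl ⟨rfl, hs⟩)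
        obtain ⟨n, h1, h2⟩ := hvalid c₀ s hadj
        have := hreach_s s hs n h2
        subst this
        exact h1
  · rintro ⟨H, hconn, hHcard, hSsub⟩
    have hrootH : αD c₀ ∈ H.verts := hSsub ((himg (αD c₀)).mpr ⟨c₀, rfl⟩)
    have hcoe : H.coe.Connected := hconn.coe
    set root : H.verts := ⟨αD c₀, hrootH⟩ with hroot
    let d : V → ℕ := fun v => if h : v ∈ H.verts then H.coe.dist root ⟨v, h⟩ else 0
    let bb : V → V → V_S → ℤ := fun u v s =>
      (if s = c₀ ∧ H.Adj u v ∧ d u + 1 = d v then (1 : ℤ) else 0)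
      - (if s = c₀ ∧ H.Adj u v ∧ d v + 1 = d u then (1 : ℤ) else 0)
    have hbb_zero : ∀ u v s, s ≠ c₀ → bb u v s = 0 := by
      intro u v s hs
      simp only [bb]
      rw [if_neg (fun h => hs h.1), if_neg (fun h => hs h.1), sub_zero]
    have hbb_bound : ∀ u v s, |bb u v s| ≤ 1 := by
      intro u v s
      simp only [bb]
      split_ifs <;> norm_num
    let b : OneShotStrategy V V_S G (fun _ => 1) :=
      { b := bb
        antisymm := by
          intro u v s
          simp only [bb, H.adj_comm v u]
          ring
        bounded := hbb_bound
        supported := by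
          intro u v hadj s
          have hH : ¬ H.Adj u v := fun h => hadj (H.adj_sub h)
          simp only [bb]
          rw [if_neg (fun h => hH h.2.1), if_neg (fun h => hH h.2.1), sub_zero]
        capacity := by
          intro u v _
          calc (∑ s : V_S, |bb u v s|) = |bb u v c₀| := by
                refine Finset.sum_eq_single_of_mem c₀ (Finset.mem_univ _) ?_
                intro s _ hs
                rw [hbb_zero u v s hs, abs_zero]
            _ ≤ 1 := hbb_bound u v c₀ }
    -- every vertex of H is reachable by the center
    have key : ∀ n (v : V) (hv : v ∈ H.verts), H.coe.dist root ⟨v, hv⟩ = n →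
        Reachable [b] αD c₀ v := by
      intro n
      induction n using Nat.strong_induction_on with
      | _ n ih =>
        intro v hv hd
        rcases Nat.eq_zero_or_pos n with h0 | hpos
        · subst h0
          have hr : H.coe.Reachable root ⟨v, hv⟩ := hcoe.preconnected _ _
          have : root = (⟨v, hv⟩ : H.verts) := hr.dist_eq_zero_iff.mp hd
          have hv' : αD c₀ = v := congrArg Subtype.val this
          rw [← hv']
          exact Reachable.base
        · obtain ⟨k, rfl⟩ : ∃ k, n = k + 1 := ⟨n - 1, by omega⟩
          obtain ⟨p, hp⟩ := (hcoe.preconnected root ⟨v, hv⟩).exists_walk_length_eq_dist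
          rw [hd] at hp
          have hq : p.reverse.length = k + 1 := by
            rw [SimpleGraph.Walk.length_reverse, hp]
          obtain ⟨x, hadj, r, hlen⟩ := walk_cons_decomp p.reverse (by omega)
          have hrk : r.length = k := by omega
          -- dist root x ≤ k
          have hdx_le : H.coe.dist root x ≤ k := by
            have := SimpleGraph.dist_le r.reverse
            rwa [SimpleGraph.Walk.length_reverse, hrk] at this
          -- dist root x ≥ k
          have hdx_ge : k ≤ H.coe.dist root x := by
            by_contra hlt
            push_neg at hlt
            obtain ⟨w, hw⟩ := (hcoe.preconnected root x).exists_walk_length_eq_dist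
            have hle := SimpleGraph.dist_le (w.concat hadj.symm)
            rw [SimpleGraph.Walk.length_concat, hw, hd] at hle
            omega
          have hdx : H.coe.dist root x = k := le_antisymm hdx_le hdx_ge
          have hx : Reachable [b] αD c₀ (x : V) := ih k (by omega) x x.2 (by
            convert hdx)
          refine Reachable.step b hx (List.mem_singleton_self b) ?_
          have hHadj : H.Adj (x : V) v := hadj.symm
          have hdxv : d (x : V) + 1 = d v := by
            simp only [d, dif_pos x.2, dif_pos hv]
            rw [hd]
            have : (⟨(x : V), x.2⟩ : H.verts) = x := rfl
            rw [this, hdx]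
          show 0 < (if c₀ = c₀ ∧ H.Adj (x : V) v ∧ d (x : V) + 1 = d v then (1 : ℤ) else 0)
            - (if c₀ = c₀ ∧ H.Adj (x : V) v ∧ d v + 1 = d (x : V) then (1 : ℤ) else 0)
          rw [if_pos ⟨rfl, hHadj, hdxv⟩, if_neg (fun h => by omega)]
          norm_num
    have reachAll : ∀ v, v ∈ H.verts → Reachable [b] αD c₀ v := by
      intro v hv
      exact key (H.coe.dist root ⟨v, hv⟩) v hv rfl
    refine ⟨b, ?_, ?_, ?_⟩
    · intro s₁ s₂ hadj
      rcases (hstar s₁ s₂).mp hadj with ⟨h1, h2⟩ | ⟨h1, h2⟩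
      · subst h1
        exact ⟨αD s₂, reachAll (αD s₂) (hSsub ((himg _).mpr ⟨s₂, rfl⟩)), Reachable.base⟩
      · subst h1
        exact ⟨αD s₁, Reachable.base, reachAll (αD s₁) (hSsub ((himg _).mpr ⟨s₁, rfl⟩))⟩
    · exact hbb_zero
    · refine le_trans (Set.ncard_le_ncard ?_ (Set.toFinite _)) hHcard
      rintro e ⟨u, v, rfl, hne⟩
      rw [SimpleGraph.Subgraph.mem_edgeSet]
      have : bb u v c₀ ≠ 0 := hne
      by_contra hH
      apply this
      simp only [bb]
      rw [if_neg (fun h => hH h.2.1), if_neg (fun h => hH h.2.1), sub_zero]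
end

section
/- Time-expanded integral decomposition of a single-root flow (the combinatorial content of Theorem 4, 'Simply Executable Edge-disjoint Path Set'): Let G = (V, E) be a finite simple graph with capacities c : E → ℕ, let r ∈ V be a root node, let S be a finite type of requests with target assignment d : S → V, and let N ≥ 1. Suppose there exists an integer flow f with respect to the scaled capacities N·c (i.e., f((u,v)) = −f((v,u)) and |f((u,v))| ≤ N·c(uv) for every edge uv ∈ E) whose divergence satisfies, for every node u, Σ_{v : uv ∈ E} f((u,v)) = (|S| if u = r else 0) − |{s ∈ S : d s = u}|. Then there exist integer flows f_1, …, f_N, each with respect to the capacities c, and an assignment σ : S → Fin N of each request to a shot, such that for every k and every node u, Σ_{v : uv ∈ E} f_k((u,v)) = (|{s : σ s = k}| if u = r else 0) − |{s ∈ S : d s = u and σ s = k}|. In other words, the total flow from the root to the targets can always be split into N per-shot flows, each respecting the single-shot capacities, with every request delivered entirely within one shot. -/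
open Finset

section Core
variable {V : Type*} [Fintype V] [DecidableEq V]
set_option linter.unusedSectionVars false

private lemma double_sum_antisym (g : V → V → ℤ) (hg : ∀ u v, g u v = - g v u) (A : Finset V) :
    ∑ x ∈ A, ∑ v ∈ A, g x v = 0 := by
  have h : ∑ x ∈ A, ∑ v ∈ A, g x v = -∑ x ∈ A, ∑ v ∈ A, g x v := by
    calc ∑ x ∈ A, ∑ v ∈ A, g x v = ∑ x ∈ A, ∑ v ∈ A, -g v x := by
          refine Finset.sum_congr rfl fun x _ => Finset.sum_congr rfl fun v _ => hg x v
    _ = -∑ x ∈ A, ∑ v ∈ A, g v x := by simp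
    _ = -∑ x ∈ A, ∑ v ∈ A, g x v := by rw [Finset.sum_comm]
  omega

private lemma cut_sum (g : V → V → ℤ) (hg : ∀ u v, g u v = - g v u) (A : Finset V) :
    ∑ x ∈ A, ∑ v, g x v = ∑ x ∈ A, ∑ v ∈ Aᶜ, g x v := by
  have h : ∀ x, ∑ v, g x v = ∑ v ∈ A, g x v + ∑ v ∈ Aᶜ, g x v :=
    fun x => (Finset.sum_add_sum_compl A _).symm
  rw [Finset.sum_congr rfl fun x _ => h x, Finset.sum_add_distrib,
    double_sum_antisym g hg A, zero_add]

private lemma sum_shift {s : Finset V} {p q : V → ℕ} {u y : V} (hu : u ∈ s) (hy : y ∈ s)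
    (hne : u ≠ y) (h1 : q u + 1 ≤ p u) (h2 : q y ≤ p y + 1)
    (h3 : ∀ x ∈ s, x ≠ u → x ≠ y → q x = p x) : ∑ x ∈ s, q x ≤ ∑ x ∈ s, p x := by
  have hy' : y ∈ s.erase u := Finset.mem_erase.2 ⟨hne.symm, hy⟩
  have key : ∑ x ∈ (s.erase u).erase y, q x = ∑ x ∈ (s.erase u).erase y, p x := by
    refine Finset.sum_congr rfl fun x hx => ?_
    have h1x := Finset.mem_erase.1 hx
    have h2x := Finset.mem_erase.1 h1x.2
    exact h3 x h2x.2 h2x.1 h1x.1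
  rw [← Finset.add_sum_erase s q hu, ← Finset.add_sum_erase s p hu,
    ← Finset.add_sum_erase _ q hy', ← Finset.add_sum_erase _ p hy', key]
  omega

variable {V : Type*} [Fintype V] [DecidableEq V]
set_option linter.unusedSectionVars false

private def tweak (g : V → V → ℤ) (u y : V) : V → V → ℤ :=
  fun a b => g a b - (if a = u ∧ b = y then 1 else 0) + (if a = y ∧ b = u then 1 else 0)

private lemma tweak_anti {g : V → V → ℤ} (hg : ∀ a b, g a b = - g b a) (u y : V) :
    ∀ a b, tweak g u y a b = - tweak g u y b a := by
  intro a b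
  unfold tweak
  rw [hg a b]
  by_cases h1 : a = u ∧ b = y <;> by_cases h2 : a = y ∧ b = u <;>
    simp [h1, h2, and_comm] <;> ring_nf <;> omega

private lemma tweak_uy {g : V → V → ℤ} {u y : V} (h : u ≠ y) :
    tweak g u y u y = g u y - 1 := by simp [tweak, h, Ne.symm h]

private lemma tweak_yu {g : V → V → ℤ} {u y : V} (h : u ≠ y) :
    tweak g u y y u = g y u + 1 := by simp [tweak, h, Ne.symm h]

private lemma tweak_other {g : V → V → ℤ} {u y a b : V} (h1 : ¬(a = u ∧ b = y))
    (h2 : ¬(a = y ∧ b = u)) : tweak g u y a b = g a b := by simp [tweak, h1, h2]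

private lemma tweak_div {g : V → V → ℤ} {u y : V} (h : u ≠ y) (x : V) :
    ∑ v, tweak g u y x v =
      ∑ v, g x v - (if x = u then 1 else 0) + (if x = y then 1 else 0) := by
  unfold tweak
  rw [Finset.sum_add_distrib, Finset.sum_sub_distrib]
  congr 1
  · congr 1
    by_cases hx : x = u
    · subst hx
      simp [h]
    · simp [hx]
  · by_cases hx : x = y
    · subst hx
      simp [Ne.symm h]
    · simp [hx]

private def Dval (m : V → ℕ) (r : V) (g : V → V → ℤ) : ℕ :=
  ∑ x ∈ univ.erase r, ((∑ v, g x v).toNat + (-(m x : ℤ) - ∑ v, g x v).toNat)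


private lemma chain'_mem_imp {α : Type*} {l : List α} {R S : α → α → Prop} (h : l.Chain' R)
    (himp : ∀ a ∈ l, ∀ b ∈ l, R a b → S a b) : l.Chain' S := by
  induction l with
  | nil => exact List.isChain_nil
  | cons a l ih =>
    cases l with
    | nil => exact List.isChain_singleton _
    | cons b l' =>
      unfold List.Chain' at h ⊢
      rw [List.isChain_cons_cons] at h ⊢
      refine ⟨himp a (by simp) b (by simp) h.1, ih h.2 ?_⟩
      intro x hx y hy
      exact himp x (List.mem_cons_of_mem _ hx) y (List.mem_cons_of_mem _ hy)

private lemma getLast_eq_of_eq {α : Type*} {l l' : List α} (h : l = l') (hl : l ≠ []) :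
    l.getLast hl = l'.getLast (h ▸ hl) := by subst h; rfl

private lemma push1 (m : V → ℕ) (r : V) (L U : V → V → ℤ)
    (hLU : ∀ a b, L a b = - U b a) (hdiag : ∀ a, U a a ≤ 0) :
    ∀ (n : ℕ) (t : List V) (g : V → V → ℤ) (u : V),
    (u :: t).length ≤ n →
    (∀ a b, g a b = - g b a) →
    (∀ a b, L a b ≤ g a b ∧ g a b ≤ U a b) →
    (u :: t).Chain' (fun a b => L a b < g a b) →
    u ≠ r → 1 ≤ ∑ v, g u v →
    ((u :: t).getLast (List.cons_ne_nil u t) = r ∨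
      ∑ v, g ((u :: t).getLast (List.cons_ne_nil u t)) v < 0) →
    ∃ g', (∀ a b, g' a b = - g' b a) ∧ (∀ a b, L a b ≤ g' a b ∧ g' a b ≤ U a b) ∧
      Dval m r g' < Dval m r g := by
  intro n
  induction n with
  | zero => intro t g u hlen; simp at hlen
  | succ n IH =>
    intro t g u hlen hanti hbox hchain hur hexc hx
    cases t with
    | nil =>
      exfalso
      simp only [List.getLast_singleton] at hx
      rcases hx with hx | hx
      · exact hur hx
      · omega
    | cons y t' =>
      have hR : L u y < g u y := (List.isChain_cons_cons.1 hchain).1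
      have hchain' : (y :: t').Chain' (fun a b => L a b < g a b) :=
        (List.isChain_cons_cons.1 hchain).2
      have huy : u ≠ y := by
        rintro rfl
        have h0 : g u u = 0 := by have := hanti u u; omega
        have h1 : 0 ≤ L u u := by rw [hLU]; have := hdiag u; omega
        omega
      have hlast : (u :: y :: t').getLast (List.cons_ne_nil _ _) =
          (y :: t').getLast (List.cons_ne_nil _ _) := List.getLast_cons _
      by_cases hmem : u ∈ y :: t'
      · obtain ⟨s1, t2, hdec⟩ := List.append_of_mem hmem
        have hsuffix : (u :: t2) <:+ (u :: y :: t') := ⟨u :: s1, by simp [hdec]⟩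
        have hlen2 : (u :: t2).length ≤ n := by
          have := hlen
          have h2 : (y :: t').length = s1.length + (u :: t2).length := by
            rw [hdec]; simp
          simp only [List.length_cons] at this h2 ⊢
          omega
        have hchain2 : (u :: t2).Chain' (fun a b => L a b < g a b) :=
          List.IsChain.suffix hchain hsuffix
        have hlast2 : (y :: t').getLast (List.cons_ne_nil _ _) =
            (u :: t2).getLast (List.cons_ne_nil _ _) :=
          (getLast_eq_of_eq hdec (List.cons_ne_nil _ _)).trans
            (List.getLast_append_of_ne_nil _ (List.cons_ne_nil _ _))
        rw [hlast, hlast2] at hx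
        exact IH t2 g u hlen2 hanti hbox hchain2 hur hexc hx
      · -- push one unit along (u, y)
        set g1 := tweak g u y with hg1
        have hanti1 := tweak_anti hanti u y
        have hbox1 : ∀ a b, L a b ≤ g1 a b ∧ g1 a b ≤ U a b := by
          intro a b
          by_cases h1 : a = u ∧ b = y
          · obtain ⟨rfl, rfl⟩ := h1
            rw [hg1, tweak_uy huy]
            constructor
            · omega
            · have := (hbox a b).2; omega
          · by_cases h2 : a = y ∧ b = u
            · obtain ⟨rfl, rfl⟩ := h2
              rw [hg1, tweak_yu huy]
              constructor
              · have := (hbox a b).1; omega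
              · have hUba : g a b < U a b := by
                  have h3 := hanti b a
                  have h4 := hLU b a
                  omega
                omega
            · rw [hg1, tweak_other h1 h2]; exact hbox a b
        have hdu : ∑ v, g1 u v = ∑ v, g u v - 1 := by
          rw [hg1, tweak_div huy u]; simp [huy]
        have hdy : ∑ v, g1 y v = ∑ v, g y v + 1 := by
          rw [hg1, tweak_div huy y]; simp [Ne.symm huy]
        have hdo : ∀ x, x ≠ u → x ≠ y → ∑ v, g1 x v = ∑ v, g x v := by
          intro x hxu hxy
          rw [hg1, tweak_div huy x]; simp [hxu, hxy]
        by_cases habs : y = r ∨ ∑ v, g y v < 0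
        · refine ⟨g1, hanti1, hbox1, ?_⟩
          unfold Dval
          apply Finset.sum_lt_sum
          · intro x hxm
            rcases Finset.mem_erase.1 hxm with ⟨hxr, -⟩
            by_cases hxu : x = u
            · subst hxu; rw [hdu]; omega
            · by_cases hxy : x = y
              · subst hxy
                rcases habs with h | h
                · exact absurd h hxr
                · rw [hdy]; omega
              · rw [hdo x hxu hxy]
          · refine ⟨u, Finset.mem_erase.2 ⟨hur, Finset.mem_univ u⟩, ?_⟩
            rw [hdu]; omega
        · push_neg at habs
          obtain ⟨hyr, hy0⟩ := habs
          have hkey : Dval m r g1 ≤ Dval m r g := by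
            apply sum_shift (Finset.mem_erase.2 ⟨hur, Finset.mem_univ u⟩)
              (Finset.mem_erase.2 ⟨hyr, Finset.mem_univ y⟩) huy
            · rw [hdu]; omega
            · rw [hdy]; omega
            · intro x _ hxu hxy; rw [hdo x hxu hxy]
          have hchain1 : (y :: t').Chain' (fun a b => L a b < g1 a b) := by
            apply chain'_mem_imp hchain'
            intro a ha b hb hab
            have hau : a ≠ u := fun h => hmem (h ▸ ha)
            have hbu : b ≠ u := fun h => hmem (h ▸ hb)
            rw [hg1, tweak_other (fun h => hau h.1) (fun h => hbu h.2)]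
            exact hab
          obtain ⟨x, hxdef⟩ : ∃ x, (y :: t').getLast (List.cons_ne_nil y t') = x := ⟨_, rfl⟩
          rw [hlast, hxdef] at hx
          have hxmem : x ∈ y :: t' := hxdef ▸ List.getLast_mem _
          have hxu : x ≠ u := fun h => hmem (h ▸ hxmem)
          have hxny : x ≠ y := by
            rintro rfl
            rcases hx with h | h
            · exact hyr h
            · omega
          have hx1 : (y :: t').getLast (List.cons_ne_nil y t') = r ∨
              ∑ v, g1 ((y :: t').getLast (List.cons_ne_nil y t')) v < 0 := by
            rw [hxdef]
            rcases hx with h | h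
            · exact Or.inl h
            · exact Or.inr (by rw [hdo x hxu hxny]; exact h)
          obtain ⟨g', hg'1, hg'2, hg'3⟩ :=
            IH t' g1 y (by simp only [List.length_cons] at hlen ⊢; omega) hanti1 hbox1
              hchain1 hyr (by rw [hdy]; omega) hx1
          exact ⟨g', hg'1, hg'2, lt_of_lt_of_le hg'3 hkey⟩

private lemma push2 (m : V → ℕ) (r : V) (L U : V → V → ℤ)
    (hLU : ∀ a b, L a b = - U b a) (hdiag : ∀ a, U a a ≤ 0) :
    ∀ (n : ℕ) (t : List V) (g : V → V → ℤ) (u : V),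
    (u :: t).length ≤ n →
    (∀ a b, g a b = - g b a) →
    (∀ a b, L a b ≤ g a b ∧ g a b ≤ U a b) →
    (u :: t).Chain' (fun a b => g a b < U a b) →
    u ≠ r → ∑ v, g u v ≤ -(m u : ℤ) - 1 →
    ((u :: t).getLast (List.cons_ne_nil u t) = r ∨
      -(m ((u :: t).getLast (List.cons_ne_nil u t)) : ℤ) <
        ∑ v, g ((u :: t).getLast (List.cons_ne_nil u t)) v) →
    ∃ g', (∀ a b, g' a b = - g' b a) ∧ (∀ a b, L a b ≤ g' a b ∧ g' a b ≤ U a b) ∧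
      Dval m r g' < Dval m r g := by
  intro n
  induction n with
  | zero => intro t g u hlen; simp at hlen
  | succ n IH =>
    intro t g u hlen hanti hbox hchain hur hexc hx
    cases t with
    | nil =>
      exfalso
      simp only [List.getLast_singleton] at hx
      rcases hx with hx | hx
      · exact hur hx
      · omega
    | cons y t' =>
      have hR : g u y < U u y := (List.isChain_cons_cons.1 hchain).1
      have hchain' : (y :: t').Chain' (fun a b => g a b < U a b) :=
        (List.isChain_cons_cons.1 hchain).2
      have huy : u ≠ y := by
        rintro rfl
        have h0 : g u u = 0 := by have := hanti u u; omega
        have h1 := hdiag u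
        omega
      have hlast : (u :: y :: t').getLast (List.cons_ne_nil _ _) =
          (y :: t').getLast (List.cons_ne_nil _ _) := List.getLast_cons _
      by_cases hmem : u ∈ y :: t'
      · obtain ⟨s1, t2, hdec⟩ := List.append_of_mem hmem
        have hsuffix : (u :: t2) <:+ (u :: y :: t') := ⟨u :: s1, by simp [hdec]⟩
        have hlen2 : (u :: t2).length ≤ n := by
          have := hlen
          have h2 : (y :: t').length = s1.length + (u :: t2).length := by
            rw [hdec]; simp
          simp only [List.length_cons] at this h2 ⊢
          omega
        have hchain2 : (u :: t2).Chain' (fun a b => g a b < U a b) :=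
          List.IsChain.suffix hchain hsuffix
        have hlast2 : (y :: t').getLast (List.cons_ne_nil _ _) =
            (u :: t2).getLast (List.cons_ne_nil _ _) :=
          (getLast_eq_of_eq hdec (List.cons_ne_nil _ _)).trans
            (List.getLast_append_of_ne_nil _ (List.cons_ne_nil _ _))
        rw [hlast, hlast2] at hx
        exact IH t2 g u hlen2 hanti hbox hchain2 hur hexc hx
      · -- push one unit along (u, y), increasing g u y
        set g1 := tweak g y u with hg1
        have hanti1 := tweak_anti hanti y u
        have hbox1 : ∀ a b, L a b ≤ g1 a b ∧ g1 a b ≤ U a b := by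
          intro a b
          by_cases h1 : a = y ∧ b = u
          · obtain ⟨rfl, rfl⟩ := h1
            rw [hg1, tweak_uy (Ne.symm huy)]
            constructor
            · have hLab : L a b < g a b := by
                have h3 := hanti b a
                have h4 := hLU a b
                omega
              omega
            · have := (hbox a b).2; omega
          · by_cases h2 : a = u ∧ b = y
            · obtain ⟨rfl, rfl⟩ := h2
              rw [hg1, tweak_yu (Ne.symm huy)]
              constructor
              · have := (hbox a b).1; omega
              · omega
            · rw [hg1, tweak_other h1 h2]; exact hbox a b
        have hdu : ∑ v, g1 u v = ∑ v, g u v + 1 := by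
          rw [hg1, tweak_div (Ne.symm huy) u]; simp [huy]
        have hdy : ∑ v, g1 y v = ∑ v, g y v - 1 := by
          rw [hg1, tweak_div (Ne.symm huy) y]; simp [Ne.symm huy]
        have hdo : ∀ x, x ≠ u → x ≠ y → ∑ v, g1 x v = ∑ v, g x v := by
          intro x hxu hxy
          rw [hg1, tweak_div (Ne.symm huy) x]; simp [hxu, hxy]
        by_cases habs : y = r ∨ -(m y : ℤ) < ∑ v, g y v
        · refine ⟨g1, hanti1, hbox1, ?_⟩
          unfold Dval
          apply Finset.sum_lt_sum
          · intro x hxm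
            rcases Finset.mem_erase.1 hxm with ⟨hxr, -⟩
            by_cases hxu : x = u
            · subst hxu; rw [hdu]; omega
            · by_cases hxy : x = y
              · subst hxy
                rcases habs with h | h
                · exact absurd h hxr
                · rw [hdy]; omega
              · rw [hdo x hxu hxy]
          · refine ⟨u, Finset.mem_erase.2 ⟨hur, Finset.mem_univ u⟩, ?_⟩
            rw [hdu]; omega
        · push_neg at habs
          obtain ⟨hyr, hy0⟩ := habs
          have hkey : Dval m r g1 ≤ Dval m r g := by
            apply sum_shift (Finset.mem_erase.2 ⟨hur, Finset.mem_univ u⟩)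
              (Finset.mem_erase.2 ⟨hyr, Finset.mem_univ y⟩) huy
            · rw [hdu]; omega
            · rw [hdy]; omega
            · intro x _ hxu hxy; rw [hdo x hxu hxy]
          have hchain1 : (y :: t').Chain' (fun a b => g1 a b < U a b) := by
            apply chain'_mem_imp hchain'
            intro a ha b hb hab
            have hau : a ≠ u := fun h => hmem (h ▸ ha)
            have hbu : b ≠ u := fun h => hmem (h ▸ hb)
            rw [hg1, tweak_other (fun h => hbu h.2) (fun h => hau h.1)]
            exact hab
          obtain ⟨x, hxdef⟩ : ∃ x, (y :: t').getLast (List.cons_ne_nil y t') = x := ⟨_, rfl⟩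
          rw [hlast, hxdef] at hx
          have hxmem : x ∈ y :: t' := hxdef ▸ List.getLast_mem _
          have hxu : x ≠ u := fun h => hmem (h ▸ hxmem)
          have hxny : x ≠ y := by
            rintro rfl
            rcases hx with h | h
            · exact hyr h
            · omega
          have hx1 : (y :: t').getLast (List.cons_ne_nil y t') = r ∨
              -(m ((y :: t').getLast (List.cons_ne_nil y t')) : ℤ) <
                ∑ v, g1 ((y :: t').getLast (List.cons_ne_nil y t')) v := by
            rw [hxdef]
            rcases hx with h | h
            · exact Or.inl h
            · exact Or.inr (by rw [hdo x hxu hxny]; exact h)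
          obtain ⟨g', hg'1, hg'2, hg'3⟩ :=
            IH t' g1 y (by simp only [List.length_cons] at hlen ⊢; omega) hanti1 hbox1
              hchain1 hyr (by rw [hdy]; omega) hx1
          exact ⟨g', hg'1, hg'2, lt_of_lt_of_le hg'3 hkey⟩

private lemma decrease (m : V → ℕ) (r : V) (Nz : ℤ) (hN : 1 ≤ Nz) (f L U : V → V → ℤ)
    (hLU : ∀ a b, L a b = - U b a) (hdiag : ∀ a, U a a ≤ 0)
    (hfanti : ∀ a b, f a b = - f b a)
    (hfL : ∀ a b, Nz * L a b ≤ f a b) (hfU : ∀ a b, f a b ≤ Nz * U a b)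
    (hdf : ∀ x, x ≠ r → -(m x : ℤ) ≤ ∑ v, f x v ∧ ∑ v, f x v ≤ 0)
    (g : V → V → ℤ) (hanti : ∀ a b, g a b = - g b a)
    (hbox : ∀ a b, L a b ≤ g a b ∧ g a b ≤ U a b) (hD : Dval m r g ≠ 0) :
    ∃ g', (∀ a b, g' a b = - g' b a) ∧ (∀ a b, L a b ≤ g' a b ∧ g' a b ≤ U a b) ∧
      Dval m r g' < Dval m r g := by
  classical
  obtain ⟨u, hu, hpen⟩ := Finset.exists_ne_zero_of_sum_ne_zero hD
  have hur : u ≠ r := (Finset.mem_erase.1 hu).1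
  have hcases : 1 ≤ ∑ v, g u v ∨ ∑ v, g u v ≤ -(m u : ℤ) - 1 := by omega
  rcases hcases with h1 | h1
  · -- excess case
    set A := univ.filter (fun x => Relation.ReflTransGen (fun a b => L a b < g a b) u x)
      with hA
    by_cases habs : ∃ x ∈ A, x = r ∨ ∑ v, g x v < 0
    · obtain ⟨x, hxA, hxabs⟩ := habs
      have hrtg : Relation.ReflTransGen (fun a b => L a b < g a b) u x :=
        (Finset.mem_filter.1 hxA).2
      obtain ⟨l, hch, hlast⟩ := List.exists_isChain_cons_of_relationReflTransGen hrtg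
      exact push1 m r L U hLU hdiag (u :: l).length l g u le_rfl hanti hbox hch hur h1
        (by rw [hlast]; exact hxabs)
    · exfalso
      push_neg at habs
      have huA : u ∈ A := Finset.mem_filter.2 ⟨Finset.mem_univ u, Relation.ReflTransGen.refl⟩
      have hcut : ∀ x ∈ A, ∀ v ∈ Aᶜ, g x v = L x v := by
        intro x hx v hv
        have hvA : v ∉ A := Finset.mem_compl.1 hv
        have hnR : ¬ L x v < g x v := by
          intro hR
          exact hvA (Finset.mem_filter.2
            ⟨Finset.mem_univ v, ((Finset.mem_filter.1 hx).2).tail hR⟩)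
        have := (hbox x v).1
        omega
      have hS1 : 1 ≤ ∑ x ∈ A, ∑ v, g x v :=
        le_trans h1 (Finset.single_le_sum (fun x hx => (habs x hx).2) huA)
      have hS2 : Nz * ∑ x ∈ A, ∑ v, g x v ≤ 0 := by
        calc Nz * ∑ x ∈ A, ∑ v, g x v = Nz * ∑ x ∈ A, ∑ v ∈ Aᶜ, g x v := by
              rw [cut_sum g hanti A]
        _ = ∑ x ∈ A, ∑ v ∈ Aᶜ, Nz * g x v := by rw [Finset.mul_sum]; simp [Finset.mul_sum]
        _ = ∑ x ∈ A, ∑ v ∈ Aᶜ, Nz * L x v := by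
              refine Finset.sum_congr rfl fun x hx => Finset.sum_congr rfl fun v hv => ?_
              rw [hcut x hx v hv]
        _ ≤ ∑ x ∈ A, ∑ v ∈ Aᶜ, f x v :=
              Finset.sum_le_sum fun x _ => Finset.sum_le_sum fun v _ => hfL x v
        _ = ∑ x ∈ A, ∑ v, f x v := (cut_sum f hfanti A).symm
        _ ≤ 0 := Finset.sum_nonpos fun x hx => (hdf x (habs x hx).1).2
      nlinarith [hS1, hS2, hN]
  · -- deficiency case
    set A := univ.filter (fun x => Relation.ReflTransGen (fun a b => g a b < U a b) u x)
      with hA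
    by_cases habs : ∃ x ∈ A, x = r ∨ -(m x : ℤ) < ∑ v, g x v
    · obtain ⟨x, hxA, hxabs⟩ := habs
      have hrtg : Relation.ReflTransGen (fun a b => g a b < U a b) u x :=
        (Finset.mem_filter.1 hxA).2
      obtain ⟨l, hch, hlast⟩ := List.exists_isChain_cons_of_relationReflTransGen hrtg
      exact push2 m r L U hLU hdiag (u :: l).length l g u le_rfl hanti hbox hch hur h1
        (by rw [hlast]; exact hxabs)
    · exfalso
      push_neg at habs
      have huA : u ∈ A := Finset.mem_filter.2 ⟨Finset.mem_univ u, Relation.ReflTransGen.refl⟩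
      have hcut : ∀ x ∈ A, ∀ v ∈ Aᶜ, g x v = U x v := by
        intro x hx v hv
        have hvA : v ∉ A := Finset.mem_compl.1 hv
        have hnR : ¬ g x v < U x v := by
          intro hR
          exact hvA (Finset.mem_filter.2
            ⟨Finset.mem_univ v, ((Finset.mem_filter.1 hx).2).tail hR⟩)
        have := (hbox x v).2
        omega
      have hT : (0 : ℤ) ≤ ∑ x ∈ A, (m x : ℤ) :=
        Finset.sum_nonneg fun x _ => by positivity
      have hS1 : ∑ x ∈ A, ∑ v, g x v ≤ -(∑ x ∈ A, (m x : ℤ)) - 1 := by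
        have hlt : ∑ x ∈ A, ∑ v, g x v < ∑ x ∈ A, -(m x : ℤ) := by
          apply Finset.sum_lt_sum
          · intro x hx
            exact (habs x hx).2
          · exact ⟨u, huA, by omega⟩
        rw [Finset.sum_neg_distrib] at hlt
        omega
      have hS2 : -(∑ x ∈ A, (m x : ℤ)) ≤ Nz * ∑ x ∈ A, ∑ v, g x v := by
        have hc : Nz * ∑ x ∈ A, ∑ v, g x v = ∑ x ∈ A, ∑ v ∈ Aᶜ, Nz * U x v := by
          rw [cut_sum g hanti A, Finset.mul_sum]
          refine Finset.sum_congr rfl fun x hx => ?_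
          rw [Finset.mul_sum]
          exact Finset.sum_congr rfl fun v hv => by rw [hcut x hx v hv]
        rw [hc]
        calc -(∑ x ∈ A, (m x : ℤ)) = ∑ x ∈ A, -(m x : ℤ) := by
              rw [Finset.sum_neg_distrib]
        _ ≤ ∑ x ∈ A, ∑ v, f x v :=
              Finset.sum_le_sum fun x hx => (hdf x (habs x hx).1).1
        _ = ∑ x ∈ A, ∑ v ∈ Aᶜ, f x v := cut_sum f hfanti A
        _ ≤ ∑ x ∈ A, ∑ v ∈ Aᶜ, Nz * U x v :=
              Finset.sum_le_sum fun x _ => Finset.sum_le_sum fun v _ => hfU x v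
      have h3 : Nz * ∑ x ∈ A, ∑ v, g x v ≤ Nz * (-(∑ x ∈ A, (m x : ℤ)) - 1) :=
        mul_le_mul_of_nonneg_left hS1 (by omega)
      nlinarith [h3, hS2, hT, hN]

private lemma exists_box_flow (m : V → ℕ) (r : V) (Nz : ℤ) (hN : 1 ≤ Nz)
    (f L U : V → V → ℤ)
    (hLU : ∀ a b, L a b = - U b a) (hdiag : ∀ a, U a a ≤ 0)
    (hfanti : ∀ a b, f a b = - f b a)
    (hfL : ∀ a b, Nz * L a b ≤ f a b) (hfU : ∀ a b, f a b ≤ Nz * U a b)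
    (hdf : ∀ x, x ≠ r → -(m x : ℤ) ≤ ∑ v, f x v ∧ ∑ v, f x v ≤ 0)
    (g₀ : V → V → ℤ) (h₀anti : ∀ a b, g₀ a b = - g₀ b a)
    (h₀box : ∀ a b, L a b ≤ g₀ a b ∧ g₀ a b ≤ U a b) :
    ∃ g : V → V → ℤ, (∀ a b, g a b = - g b a) ∧ (∀ a b, L a b ≤ g a b ∧ g a b ≤ U a b) ∧
      ∀ x, x ≠ r → -(m x : ℤ) ≤ ∑ v, g x v ∧ ∑ v, g x v ≤ 0 := by
  suffices H : ∀ (n : ℕ) (g : V → V → ℤ), (∀ a b, g a b = - g b a) →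
      (∀ a b, L a b ≤ g a b ∧ g a b ≤ U a b) → Dval m r g ≤ n →
      ∃ g' : V → V → ℤ, (∀ a b, g' a b = - g' b a) ∧
        (∀ a b, L a b ≤ g' a b ∧ g' a b ≤ U a b) ∧ Dval m r g' = 0 by
    obtain ⟨g, hg1, hg2, hg3⟩ := H (Dval m r g₀) g₀ h₀anti h₀box le_rfl
    refine ⟨g, hg1, hg2, fun x hx => ?_⟩
    have hx' : x ∈ univ.erase r := Finset.mem_erase.2 ⟨hx, Finset.mem_univ x⟩
    have : ((∑ v, g x v).toNat + (-(m x : ℤ) - ∑ v, g x v).toNat) = 0 := by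
      by_contra hne
      exact hne (Finset.sum_eq_zero_iff.1 hg3 x hx')
    omega
  intro n
  induction n with
  | zero =>
    intro g hg1 hg2 hg3
    exact ⟨g, hg1, hg2, Nat.le_zero.1 hg3⟩
  | succ n IH =>
    intro g hg1 hg2 hg3
    by_cases hD : Dval m r g = 0
    · exact ⟨g, hg1, hg2, hD⟩
    · obtain ⟨g', h1, h2, h3⟩ :=
        decrease m r Nz hN f L U hLU hdiag hfanti hfL hfU hdf g hg1 hg2 hD
      exact IH g' h1 h2 (by omega)

private lemma int_split (Nz a c : ℤ) (hN : 1 ≤ Nz) (ha0 : 0 ≤ a) (hac : a ≤ Nz * c) :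
    0 ≤ a / Nz ∧ a / Nz ≤ c ∧ a / Nz ≤ a ∧ a - a / Nz ≤ (Nz - 1) * c := by
  have hNz0 : (0 : ℤ) < Nz := by omega
  have h1 : 0 ≤ a / Nz := Int.ediv_nonneg ha0 (by omega)
  have h2 : a / Nz ≤ c := by
    have := Int.ediv_le_ediv hNz0 hac
    rwa [Int.mul_ediv_cancel_left c (by omega)] at this
  have h3 : a / Nz ≤ a := Int.ediv_le_self Nz ha0
  have hmod := Int.mul_ediv_add_emod a Nz
  have hm0 := Int.emod_nonneg a (show Nz ≠ 0 by omega)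
  have hm1 := Int.emod_lt_of_pos a hNz0
  refine ⟨h1, h2, h3, ?_⟩
  -- a - a/Nz = (Nz-1)*(a/Nz) + a%Nz
  rcases eq_or_lt_of_le h2 with h | h
  · -- a/Nz = c
    nlinarith
  · -- a/Nz ≤ c - 1
    nlinarith

private lemma extract (G : SimpleGraph V) [DecidableRel G.Adj] (c : Sym2 V → ℕ) (r : V)
    (m : V → ℕ) (Nn : ℕ) (hN : 1 ≤ Nn) (f : V → V → ℤ)
    (hanti : ∀ u v, f u v = - f v u)
    (hsupp : ∀ u v, ¬ G.Adj u v → f u v = 0)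
    (hcap : ∀ u v, G.Adj u v → |f u v| ≤ (Nn : ℤ) * (c (Sym2.mk u v) : ℤ))
    (hdf : ∀ x, x ≠ r → -(m x : ℤ) ≤ ∑ v, f x v ∧ ∑ v, f x v ≤ 0) :
    ∃ g : V → V → ℤ, (∀ u v, g u v = - g v u) ∧
      (∀ u v, ¬ G.Adj u v → g u v = 0) ∧
      (∀ u v, G.Adj u v → |g u v| ≤ (c (Sym2.mk u v) : ℤ)) ∧
      (∀ u v, G.Adj u v → |f u v - g u v| ≤ ((Nn : ℤ) - 1) * (c (Sym2.mk u v) : ℤ)) ∧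
      (∀ u, u ≠ r → -(m u : ℤ) ≤ ∑ v, g u v ∧ ∑ v, g u v ≤ 0) := by
  classical
  set Nz : ℤ := (Nn : ℤ) with hNzdef
  have hNz : 1 ≤ Nz := by omega
  set cc : V → V → ℤ := fun u v => (c (Sym2.mk u v) : ℤ) with hccdef
  have hccs : ∀ u v, cc u v = cc v u := by
    intro u v; simp only [cc]; rw [Sym2.eq_swap]
  have hcc0 : ∀ u v, 0 ≤ cc u v := fun u v => by positivity
  set U : V → V → ℤ := fun u v =>
    if G.Adj u v then min (cc u v) (f u v + (Nz - 1) * cc u v) else 0 with hUdef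
  set L : V → V → ℤ := fun u v =>
    if G.Adj u v then max (-cc u v) (f u v - (Nz - 1) * cc u v) else 0 with hLdef
  have hLU : ∀ a b, L a b = - U b a := by
    intro a b
    by_cases h : G.Adj a b
    · simp only [L, U, if_pos h, if_pos h.symm]
      rw [← hccs a b, hanti a b]
      rw [neg_inf]
      congr 1
      ring
    · have h' : ¬ G.Adj b a := fun hh => h hh.symm
      simp [L, U, h, h']
  have hdiag : ∀ a, U a a ≤ 0 := by
    intro a; simp [U, G.irrefl]
  have hfL : ∀ a b, Nz * L a b ≤ f a b := by
    intro a b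
    by_cases h : G.Adj a b
    · have hab : -(Nz * cc a b) ≤ f a b ∧ f a b ≤ Nz * cc a b := abs_le.1 (hcap a b h)
      have h0 := hcc0 a b
      simp only [L, if_pos h]
      rcases le_total (-cc a b) (f a b - (Nz - 1) * cc a b) with h' | h'
      · rw [max_eq_right h']
        nlinarith [mul_nonneg (show (0:ℤ) ≤ Nz - 1 by omega)
          (show (0:ℤ) ≤ Nz * cc a b - f a b by linarith [hab.2])]
      · rw [max_eq_left h']
        nlinarith
    · simp [L, h, hsupp a b h]
  have hfU : ∀ a b, f a b ≤ Nz * U a b := by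
    intro a b
    by_cases h : G.Adj a b
    · have hab : -(Nz * cc a b) ≤ f a b ∧ f a b ≤ Nz * cc a b := abs_le.1 (hcap a b h)
      have h0 := hcc0 a b
      simp only [U, if_pos h]
      rcases le_total (cc a b) (f a b + (Nz - 1) * cc a b) with h' | h'
      · rw [min_eq_left h']
        nlinarith
      · rw [min_eq_right h']
        nlinarith [mul_nonneg (show (0:ℤ) ≤ Nz - 1 by omega)
          (show (0:ℤ) ≤ Nz * cc a b + f a b by linarith [hab.1])]
    · simp [U, h, hsupp a b h]
  set g₀ : V → V → ℤ := fun u v => if 0 ≤ f u v then f u v / Nz else -((-f u v) / Nz)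
    with hg₀def
  have h₀anti : ∀ a b, g₀ a b = - g₀ b a := by
    intro a b
    have hab := hanti a b
    simp only [g₀]
    rcases lt_trichotomy (f a b) 0 with h | h | h
    · rw [if_neg (by omega), if_pos (by omega), show -f a b = f b a by omega]
    · rw [if_pos (by omega), if_pos (by omega), h, show f b a = 0 by omega]
      simp
    · rw [if_pos (by omega), if_neg (by omega), show -f b a = f a b by omega]
      ring
  have h₀box : ∀ a b, L a b ≤ g₀ a b ∧ g₀ a b ≤ U a b := by
    intro a b
    by_cases h : G.Adj a b
    · have hab : -(Nz * cc a b) ≤ f a b ∧ f a b ≤ Nz * cc a b := abs_le.1 (hcap a b h)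
      have h0 := hcc0 a b
      by_cases hf : 0 ≤ f a b
      · obtain ⟨e1, e2, e3, e4⟩ := int_split Nz (f a b) (cc a b) hNz hf (by
          rw [hNzdef] at *; omega)
        simp only [g₀, if_pos hf, L, U, if_pos h]
        constructor
        · apply max_le <;> omega
        · apply le_min <;> omega
      · push_neg at hf
        obtain ⟨e1, e2, e3, e4⟩ := int_split Nz (-f a b) (cc a b) hNz (by omega) (by
          linarith [hab.1])
        simp only [g₀, if_neg (not_le.2 hf), L, U, if_pos h]
        constructor
        · apply max_le <;> omega
        · apply le_min <;> omega
    · simp [g₀, L, U, h, hsupp a b h]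
  obtain ⟨g, hg1, hg2, hg3⟩ := exists_box_flow m r Nz hNz f L U hLU hdiag hanti hfL hfU
    hdf g₀ h₀anti h₀box
  refine ⟨g, hg1, ?_, ?_, ?_, hg3⟩
  · intro u v h
    have := hg2 u v
    simp only [L, U, if_neg h] at this
    omega
  · intro u v h
    have e0 : cc u v = ((c (Sym2.mk u v)) : ℤ) := rfl
    have hb := hg2 u v
    simp only [L, U, if_pos h] at hb
    have h2 : -cc u v ≤ g u v := le_trans (le_max_left _ _) hb.1
    have h3 : g u v ≤ cc u v := le_trans hb.2 (min_le_left _ _)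
    rw [abs_le]
    constructor <;> linarith
  · intro u v h
    have e0 : cc u v = ((c (Sym2.mk u v)) : ℤ) := rfl
    have e1 : (Nz - 1) * cc u v = ((Nn : ℤ) - 1) * ((c (Sym2.mk u v)) : ℤ) := rfl
    have hb := hg2 u v
    simp only [L, U, if_pos h] at hb
    have h2 : f u v - (Nz - 1) * cc u v ≤ g u v := le_trans (le_max_right _ _) hb.1
    have h3 : g u v ≤ f u v + (Nz - 1) * cc u v := le_trans hb.2 (min_le_right _ _)
    rw [abs_le]
    constructor <;> linarith

private lemma decompose (G : SimpleGraph V) [DecidableRel G.Adj] (c : Sym2 V → ℕ) (r : V) :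
    ∀ (Nn : ℕ), 1 ≤ Nn → ∀ (m : V → ℕ) (f : V → V → ℤ),
    (∀ u v, f u v = - f v u) →
    (∀ u v, ¬ G.Adj u v → f u v = 0) →
    (∀ u v, G.Adj u v → |f u v| ≤ (Nn : ℤ) * (c (Sym2.mk u v) : ℤ)) →
    (∀ u, ∑ v, f u v = (if u = r then (∑ x, (m x : ℤ)) else 0) - (m u : ℤ)) →
    ∃ (f' : Fin Nn → V → V → ℤ) (μ : Fin Nn → V → ℕ),
      (∀ u, ∑ k, μ k u = m u) ∧
      (∀ k u v, f' k u v = - f' k v u) ∧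
      (∀ k u v, ¬ G.Adj u v → f' k u v = 0) ∧
      (∀ k u v, G.Adj u v → |f' k u v| ≤ (c (Sym2.mk u v) : ℤ)) ∧
      (∀ k u, ∑ v, f' k u v = (if u = r then (∑ x, (μ k x : ℤ)) else 0) - (μ k u : ℤ)) := by
  intro Nn
  induction Nn with
  | zero => omega
  | succ n IH =>
    intro _ m f hanti hsupp hcap hdiv
    cases n with
    | zero =>
      refine ⟨fun _ => f, fun _ => m, ?_, fun _ => hanti, fun _ => hsupp, ?_, ?_⟩
      · intro u; simp
      · intro k u v h
        have := hcap u v h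
        simpa using this
      · intro k u
        simpa using hdiv u
    | succ n' =>
      have hn' : 1 ≤ n' + 1 := by omega
      -- extract one shot
      obtain ⟨g, hg1, hg2, hg3, hg4, hg5⟩ := extract G c r m (n' + 2) (by omega) f hanti
        hsupp hcap (fun x hx => by rw [hdiv x, if_neg hx]; constructor <;> omega)
      set m₁ : V → ℕ := fun u => if u = r then m r else (-(∑ v, g u v)).toNat with hm₁def
      have hm₁r : m₁ r = m r := by simp [hm₁def]
      have hm₁ : ∀ u, u ≠ r → ((m₁ u : ℤ) = -(∑ v, g u v) ∧ m₁ u ≤ m u) := by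
        intro u hu
        obtain ⟨ha, hb⟩ := hg5 u hu
        constructor
        · simp only [hm₁def, if_neg hu]
          omega
        · have : ((m₁ u : ℤ)) ≤ (m u : ℤ) := by
            simp only [hm₁def, if_neg hu]
            omega
          exact_mod_cast this
      have hm₁le : ∀ u, m₁ u ≤ m u := by
        intro u
        by_cases hu : u = r
        · subst hu; omega
        · exact (hm₁ u hu).2
      set m2 : V → ℕ := fun u => m u - m₁ u with hm2def
      have hm2 : ∀ u, (m2 u : ℤ) = (m u : ℤ) - (m₁ u : ℤ) := by
        intro u
        have := hm₁le u
        simp only [hm2def]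
        omega
      -- total divergence of g is zero
      have htot : ∑ x, ∑ v, g x v = 0 := by
        have := double_sum_antisym g hg1 univ
        simpa using this
      have hgr : ∑ v, g r v = ∑ x ∈ univ.erase r, (m₁ x : ℤ) := by
        have hsplit : ∑ v, g r v + ∑ x ∈ univ.erase r, ∑ v, g x v = 0 := by
          rw [Finset.add_sum_erase univ (fun x => ∑ v, g x v) (Finset.mem_univ r)]
          exact htot
        have : ∑ x ∈ univ.erase r, ∑ v, g x v = -∑ x ∈ univ.erase r, (m₁ x : ℤ) := by
          rw [← Finset.sum_neg_distrib]
          refine Finset.sum_congr rfl fun x hx => ?_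
          have hxr : x ≠ r := (Finset.mem_erase.1 hx).1
          have := (hm₁ x hxr).1
          omega
        omega
      have hsum₁ : ∑ x, (m₁ x : ℤ) = (m₁ r : ℤ) + ∑ x ∈ univ.erase r, (m₁ x : ℤ) :=
        (Finset.add_sum_erase univ (fun x => (m₁ x : ℤ)) (Finset.mem_univ r)).symm
      -- the residual flow
      set f2 : V → V → ℤ := fun u v => f u v - g u v with hf2def
      have hf2anti : ∀ u v, f2 u v = - f2 v u := by
        intro u v; simp only [hf2def]; rw [hanti u v, hg1 u v]; ring
      have hf2supp : ∀ u v, ¬ G.Adj u v → f2 u v = 0 := by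
        intro u v h; simp only [hf2def]; rw [hsupp u v h, hg2 u v h]; ring
      have hf2cap : ∀ u v, G.Adj u v → |f2 u v| ≤ ((n' + 1 : ℕ) : ℤ) * (c (Sym2.mk u v) : ℤ) := by
        intro u v h
        have := hg4 u v h
        have he : ((n' + 2 : ℕ) : ℤ) - 1 = ((n' + 1 : ℕ) : ℤ) := by push_cast; ring
        rw [he] at this
        exact this
      have hf2div : ∀ u, ∑ v, f2 u v =
          (if u = r then (∑ x, (m2 x : ℤ)) else 0) - (m2 u : ℤ) := by
        intro u
        have hsum2 : ∑ x, (m2 x : ℤ) = ∑ x, (m x : ℤ) - ∑ x, (m₁ x : ℤ) := by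
          rw [← Finset.sum_sub_distrib]
          exact Finset.sum_congr rfl fun x _ => hm2 x
        have hsplit : ∑ v, f2 u v = ∑ v, f u v - ∑ v, g u v := by
          simp only [hf2def]; rw [Finset.sum_sub_distrib]
        rw [hsplit, hdiv u]
        by_cases hu : u = r
        · subst hu
          rw [if_pos rfl, if_pos rfl, hgr, hsum2, hsum₁, hm2 u, hm₁r]
          ring
        · rw [if_neg hu, if_neg hu, hm2 u, (hm₁ u hu).1]
          ring
      obtain ⟨f'', μ'', hμsum, hp1, hp2, hp3, hp4⟩ :=
        IH hn' m2 f2 hf2anti hf2supp hf2cap hf2div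
      refine ⟨Fin.cases g f'', Fin.cases m₁ μ'', ?_, ?_, ?_, ?_, ?_⟩
      · intro u
        rw [Fin.sum_univ_succ]
        simp only [Fin.cases_zero, Fin.cases_succ]
        rw [hμsum u]
        have := hm₁le u
        simp only [hm2def]
        omega
      · intro k u v
        refine Fin.cases ?_ ?_ k
        · simpa using hg1 u v
        · intro i; simpa using hp1 i u v
      · intro k u v h
        refine Fin.cases ?_ ?_ k
        · simpa using hg2 u v h
        · intro i; simpa using hp2 i u v h
      · intro k u v h
        refine Fin.cases ?_ ?_ k
        · simpa using hg3 u v h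
        · intro i; simpa using hp3 i u v h
      · intro k u
        refine Fin.cases ?_ ?_ k
        · simp only [Fin.cases_zero]
          by_cases hu : u = r
          · subst hu
            rw [if_pos rfl, hgr, hsum₁]
            ring
          · rw [if_neg hu, (hm₁ u hu).1]
            ring
        · intro i
          simpa using hp4 i u

private lemma assign {S : Type*} [Fintype S] [DecidableEq S] (d : S → V) :
    ∀ (n : ℕ) (μ : ℕ → V → ℕ) (R : Finset S),
    (∀ u, (R.filter fun s => d s = u).card = ∑ k ∈ Finset.range n, μ k u) →
    ∃ σ : S → ℕ, (∀ s ∈ R, σ s < n) ∧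
      ∀ k, k < n → ∀ u, (R.filter fun s => d s = u ∧ σ s = k).card = μ k u := by
  intro n
  induction n with
  | zero =>
    intro μ R hR
    refine ⟨fun _ => 0, ?_, ?_⟩
    · intro s hs
      exfalso
      have h := hR (d s)
      rw [Finset.range_zero, Finset.sum_empty, Finset.card_eq_zero] at h
      have hmem : s ∈ R.filter fun t => d t = d s := Finset.mem_filter.2 ⟨hs, rfl⟩
      rw [h] at hmem
      exact absurd hmem (Finset.notMem_empty s)
    · intro k hk; omega
  | succ n IHn =>
    intro μ R hR
    have hchoice : ∀ u, ∃ T : Finset S, T ⊆ R.filter (fun s => d s = u) ∧ T.card = μ n u := by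
      intro u
      have : μ n u ≤ (R.filter fun s => d s = u).card := by
        rw [hR u, Finset.sum_range_succ]; omega
      obtain ⟨T, h1, h2⟩ := Finset.exists_subset_card_eq this
      exact ⟨T, h1, h2⟩
    choose T hT1 hT2 using hchoice
    set Tall : Finset S := Finset.univ.biUnion T with hTalldef
    have hTmem : ∀ s, s ∈ Tall ↔ s ∈ T (d s) := by
      intro s
      simp only [hTalldef, Finset.mem_biUnion, Finset.mem_univ, true_and]
      constructor
      · rintro ⟨u, hu⟩
        have hd := (Finset.mem_filter.1 (hT1 u hu)).2
        subst hd
        exact hu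
      · intro h; exact ⟨d s, h⟩
    set R' : Finset S := R \ Tall with hR'def
    have hR' : ∀ u, (R'.filter fun s => d s = u).card = ∑ k ∈ Finset.range n, μ k u := by
      intro u
      have heq : R'.filter (fun s => d s = u) = (R.filter fun s => d s = u) \ T u := by
        ext s
        simp only [hR'def, Finset.mem_filter, Finset.mem_sdiff]
        constructor
        · rintro ⟨⟨hsR, hsT⟩, hd⟩
          refine ⟨⟨hsR, hd⟩, fun h => hsT ?_⟩
          rw [hTmem, hd]
          exact h
        · rintro ⟨⟨hsR, hd⟩, hsT⟩
          refine ⟨⟨hsR, fun h => hsT ?_⟩, hd⟩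
          rw [hTmem, hd] at h
          exact h
      rw [heq, Finset.card_sdiff_of_subset (hT1 u), hR u, Finset.sum_range_succ, hT2 u]
      omega
    obtain ⟨σ', hσ'1, hσ'2⟩ := IHn μ R' hR'
    refine ⟨fun s => if s ∈ Tall then n else σ' s, ?_, ?_⟩
    · intro s hs
      by_cases h : s ∈ Tall
      · simp [h]
      · have : σ' s < n := hσ'1 s (Finset.mem_sdiff.2 ⟨hs, h⟩)
        simp [h]
        omega
    · intro k hk u
      by_cases hkn : k = n
      · subst hkn
        have heq : (R.filter fun s => d s = u ∧ (if s ∈ Tall then k else σ' s) = k) = T u := by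
          ext s
          simp only [Finset.mem_filter]
          constructor
          · rintro ⟨hsR, hd, hite⟩
            by_cases h : s ∈ Tall
            · rw [hTmem, hd] at h
              exact h
            · exfalso
              rw [if_neg h] at hite
              have : σ' s < k := hσ'1 s (Finset.mem_sdiff.2 ⟨hsR, h⟩)
              omega
          · intro h
            have hmem := hT1 u h
            have hd := (Finset.mem_filter.1 hmem).2
            have hTa : s ∈ Tall := by rw [hTmem, hd]; exact h
            exact ⟨(Finset.mem_filter.1 hmem).1, hd, if_pos hTa⟩
        rw [heq]
        exact hT2 u
      · have hkn' : k < n := by omega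
        have heq : (R.filter fun s => d s = u ∧ (if s ∈ Tall then n else σ' s) = k) =
            (R'.filter fun s => d s = u ∧ σ' s = k) := by
          ext s
          simp only [Finset.mem_filter, hR'def, Finset.mem_sdiff]
          constructor
          · rintro ⟨hsR, hd, hite⟩
            by_cases h : s ∈ Tall
            · rw [if_pos h] at hite; omega
            · rw [if_neg h] at hite
              exact ⟨⟨hsR, h⟩, hd, hite⟩
          · rintro ⟨⟨hsR, hsT⟩, hd, hσ⟩
            exact ⟨hsR, hd, by rw [if_neg hsT]; exact hσ⟩
        rw [heq]
        exact hσ'2 k hkn' u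
end Core


/-- **Time-expanded integral decomposition of a single-root flow** (the combinatorial
content of the 'Simply Executable Edge-disjoint Path Set' theorem).  If an integer flow
with respect to the scaled capacities `N·c` routes, from the root `r`, one unit of flow
to the target `d s` of every request `s`, then it can be split into `N` per-shot integer
flows, each respecting the single-shot capacities `c`, together with an assignment
`σ` of each request to a shot in which it is delivered entirely. -/
theorem time_expanded_flow_decomposition {V : Type*} [Fintype V] [DecidableEq V]
    (G : SimpleGraph V) [DecidableRel G.Adj] (c : Sym2 V → ℕ) (r : V)
    (S : Type*) [Fintype S] [DecidableEq S] (d : S → V)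
    (N : ℕ) (hN : 1 ≤ N)
    (f : V → V → ℤ)
    (hanti : ∀ u v, f u v = - f v u)
    (hsupp : ∀ u v, ¬ G.Adj u v → f u v = 0)
    (hcap : ∀ u v, G.Adj u v → |f u v| ≤ (N : ℤ) * (c (Sym2.mk u v) : ℤ))
    (hdiv : ∀ u, ∑ v ∈ G.neighborFinset u, f u v =
      (if u = r then (Fintype.card S : ℤ) else 0)
        - ((univ.filter fun s => d s = u).card : ℤ)) :
    ∃ (f' : Fin N → V → V → ℤ) (σ : S → Fin N),
      (∀ k u v, f' k u v = - f' k v u) ∧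
      (∀ k u v, ¬ G.Adj u v → f' k u v = 0) ∧
      (∀ k u v, G.Adj u v → |f' k u v| ≤ (c (Sym2.mk u v) : ℤ)) ∧
      (∀ k u, ∑ v ∈ G.neighborFinset u, f' k u v =
        (if u = r then ((univ.filter fun s => σ s = k).card : ℤ) else 0)
          - ((univ.filter fun s => d s = u ∧ σ s = k).card : ℤ)) := by
  classical
  set m : V → ℕ := fun u => (univ.filter fun s => d s = u).card with hmdef
  have hsum : ∑ x, (m x : ℤ) = (Fintype.card S : ℤ) := by
    have h := Finset.card_eq_sum_card_fiberwise
      (f := d) (s := (univ : Finset S)) (t := (univ : Finset V)) (fun x _ => mem_univ (d x))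
    rw [Fintype.card, h]
    push_cast
    rfl
  have hnbr : ∀ (h : V → V → ℤ), (∀ u v, ¬ G.Adj u v → h u v = 0) →
      ∀ u, ∑ v ∈ G.neighborFinset u, h u v = ∑ v, h u v := by
    intro h hs u
    exact Finset.sum_subset (Finset.subset_univ _) fun v _ hv =>
      hs u v (by rwa [SimpleGraph.mem_neighborFinset] at hv)
  have hdiv' : ∀ u, ∑ v, f u v = (if u = r then (∑ x, (m x : ℤ)) else 0) - (m u : ℤ) := by
    intro u
    rw [← hnbr f hsupp u, hdiv u, hsum]
  obtain ⟨f', μ, hμsum, h1, h2, h3, h4⟩ :=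
    decompose G c r N hN m f hanti hsupp hcap hdiv'
  set μ' : ℕ → V → ℕ := fun k u => if h : k < N then μ ⟨k, h⟩ u else 0 with hμ'def
  have hcnt : ∀ u, ((univ : Finset S).filter fun s => d s = u).card =
      ∑ k ∈ Finset.range N, μ' k u := by
    intro u
    have : ∑ k ∈ Finset.range N, μ' k u = ∑ k : Fin N, μ k u := by
      rw [← Fin.sum_univ_eq_sum_range]
      exact Finset.sum_congr rfl fun k _ => by simp [hμ'def, k.isLt]
    rw [this, hμsum u]
  obtain ⟨σ₀, hσ1, hσ2⟩ := assign d N μ' univ hcnt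
  set σ : S → Fin N := fun s => ⟨σ₀ s, hσ1 s (mem_univ s)⟩ with hσdef
  have hfiber : ∀ (k : Fin N) (u : V),
      ((univ : Finset S).filter fun s => d s = u ∧ σ s = k).card = μ k u := by
    intro k u
    have he : ((univ : Finset S).filter fun s => d s = u ∧ σ s = k) =
        ((univ : Finset S).filter fun s => d s = u ∧ σ₀ s = (k : ℕ)) := by
      refine Finset.filter_congr fun s _ => ?_
      constructor
      · rintro ⟨hd, hk⟩; exact ⟨hd, by rw [← hk]⟩
      · rintro ⟨hd, hk⟩; exact ⟨hd, Fin.ext hk⟩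
    rw [he, hσ2 (k : ℕ) k.isLt u]
    simp [hμ'def, k.isLt]
  have htotal : ∀ k : Fin N,
      ((univ : Finset S).filter fun s => σ s = k).card = ∑ u, μ k u := by
    intro k
    have h := Finset.card_eq_sum_card_fiberwise
      (f := d) (s := (univ : Finset S).filter fun s => σ s = k)
      (t := (univ : Finset V)) (fun x _ => mem_univ (d x))
    rw [h]
    refine Finset.sum_congr rfl fun u _ => ?_
    rw [Finset.filter_filter, ← hfiber k u]
    congr 1
    refine Finset.filter_congr fun s _ => ?_
    tauto
  refine ⟨f', σ, h1, h2, h3, ?_⟩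
  intro k u
  rw [hnbr (f' k) (h2 k) u, h4 k u, hfiber k u, htotal k]
  by_cases hu : u = r
  · subst hu; rw [if_pos rfl, if_pos rfl]; push_cast; ring
  · rw [if_neg hu, if_neg hu]
end
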